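/- arXiv:1701.05030 — 3 statements merged into one kernel-verified Lean document; each statement's English description precedes it below -/
import Mathlib

section
/- For every integer n ≥ 1, La(n, {∨, ∧}, P_2) = C(n−1, ⌊(n−1)/2⌋): the maximum, over all families ℱ ⊆ 2^[n] containing no copy of ∨ and no copy of ∧, of the number of copies of P_2 in ℱ (i.e. of pairs of distinct sets A, B ∈ ℱ with A ⊆ B) equals C(n−1, ⌊(n−1)/2⌋). -/
open Classical Finset

noncomputable section

/-- `G` is a copy of the finite poset `α` among the subsets of `[n]`:
there is a bijection `φ` from `α` onto `G` such that `x ≤ y` implies `φ x ⊆ φ y`. -/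
def IsCopy (α : Type) [PartialOrder α] [Fintype α] {n : ℕ}
    (G : Finset (Finset (Fin n))) : Prop :=
  ∃ φ : α → Finset (Fin n), Function.Injective φ ∧
    Finset.image φ Finset.univ = G ∧ ∀ x y : α, x ≤ y → φ x ⊆ φ y

/-- `copyCount α F` is the number of copies of the poset `α` in the family `F`,
copies being counted as subfamilies of `F`. -/
def copyCount (α : Type) [PartialOrder α] [Fintype α] {n : ℕ}
    (F : Finset (Finset (Fin n))) : ℕ :=
  (F.powerset.filter fun G => IsCopy α G).card

/-- `La n P Q`: the maximum number of copies of `Q` in a `P`-free family of subsets of `[n]`. -/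
def La (n : ℕ) (P Q : Type) [PartialOrder P] [Fintype P]
    [PartialOrder Q] [Fintype Q] : ℕ :=
  ((Finset.univ : Finset (Finset (Finset (Fin n)))).filter fun F =>
    copyCount P F = 0).sup (copyCount Q)

/-- `La2 n P₁ P₂ Q`: the maximum number of copies of `Q` in a family of subsets of `[n]`
that is both `P₁`-free and `P₂`-free. -/
def La2 (n : ℕ) (P₁ P₂ Q : Type) [PartialOrder P₁] [Fintype P₁]
    [PartialOrder P₂] [Fintype P₂] [PartialOrder Q] [Fintype Q] : ℕ :=
  ((Finset.univ : Finset (Finset (Finset (Fin n)))).filter fun F =>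
    copyCount P₁ F = 0 ∧ copyCount P₂ F = 0).sup (copyCount Q)

/-- the full `k`-th level of `2^[n]`. -/
def level (n k : ℕ) : Finset (Finset (Fin n)) :=
  Finset.univ.filter fun A => A.card = k

/-- `γ^r_{i,j}(F)`: the number of `r`-element subfamilies of `F` whose intersection has
size `i` and whose union has size `j`. -/
def gammaCount (r n i j : ℕ) (F : Finset (Finset (Fin n))) : ℕ :=
  (F.powerset.filter fun G =>
    G.card = r ∧ (G.inf id).card = i ∧ (G.sup id).card = j).card

/-- `β^r_i(F)`: the number of `r`-element subfamilies of `F` whose intersection has size `i`. -/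
def betaCount (r n i : ℕ) (F : Finset (Finset (Fin n))) : ℕ :=
  (F.powerset.filter fun G => G.card = r ∧ (G.inf id).card = i).card

/-- the complete multi-level poset `K_{r 0, …, r (s-1)}`: level `i` has `r i` elements,
and every element of level `i` is below every element of level `j` whenever `i < j`. -/
def KP {s : ℕ} (r : Fin s → ℕ) : Type := Σ i, Fin (r i)

namespace KP

variable {s : ℕ} {r : Fin s → ℕ}

def le (x y : KP r) : Prop := x = y ∨ x.1 < y.1

instance : PartialOrder (KP r) where
  le := KP.le
  le_refl x := Or.inl rfl
  le_trans x y z hxy hyz := by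
    rcases hxy with rfl | h
    · exact hyz
    · rcases hyz with rfl | h'
      · exact Or.inr h
      · exact Or.inr (h.trans h')
  le_antisymm x y hxy hyx := by
    rcases hxy with rfl | h
    · rfl
    · rcases hyx with rfl | h'
      · rfl
      · exact absurd (h.trans h') (lt_irrefl _)

instance : Fintype (KP r) := inferInstanceAs (Fintype (Σ i, Fin (r i)))

end KP

/-- the chain (totally ordered poset) with `k` elements. -/
abbrev PChain (k : ℕ) := Fin k

/-- `∨_r = K_{1,r}` -/
abbrev VeePoset (r : ℕ) := KP ![1, r]

/-- `∧_r = K_{r,1}` -/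
abbrev WedgePoset (r : ℕ) := KP ![r, 1]

/-- the generalized diamond `D_r = K_{1,r,1}` -/
abbrev DiamondPoset (r : ℕ) := KP ![1, r, 1]

/-- the butterfly poset `B = K_{2,2}` -/
abbrev Butterfly := KP ![2, 2]

/-- the height `l(Q)` of a finite poset: the number of elements of a longest chain. -/
def height (Q : Type) [PartialOrder Q] [Fintype Q] : ℕ :=
  ((Finset.univ : Finset (Finset Q)).filter fun C : Finset Q =>
    IsChain (· ≤ ·) (↑C : Set Q)).sup Finset.card


/-- `Q₁ ⊗_r Q₂`: disjoint copies of `Q₁` and `Q₂` with an `r`-element antichain in between;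
everything in `Q₁` is below the middle elements and below everything in `Q₂`,
and the middle elements are below everything in `Q₂`. -/
inductive Otimes (Q₁ Q₂ : Type) (r : ℕ) : Type
  | bot : Q₁ → Otimes Q₁ Q₂ r
  | mid : Fin r → Otimes Q₁ Q₂ r
  | top : Q₂ → Otimes Q₁ Q₂ r

namespace Otimes

variable {Q₁ Q₂ : Type} {r : ℕ}

def le [PartialOrder Q₁] [PartialOrder Q₂] : Otimes Q₁ Q₂ r → Otimes Q₁ Q₂ r → Prop
  | bot a, bot b => a ≤ b
  | bot _, mid _ => True
  | bot _, top _ => True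
  | mid i, mid j => i = j
  | mid _, top _ => True
  | top a, top b => a ≤ b
  | _, _ => False

instance [PartialOrder Q₁] [PartialOrder Q₂] : PartialOrder (Otimes Q₁ Q₂ r) where
  le := Otimes.le
  le_refl x := by cases x <;> simp [Otimes.le]
  le_trans x y z hxy hyz := by
    cases x <;> cases y <;> cases z <;> simp_all [Otimes.le] <;>
      first
        | exact le_trans hxy hyz
        | trivial
  le_antisymm x y hxy hyx := by
    cases x <;> cases y <;> simp_all [Otimes.le] <;>
      first
        | exact le_antisymm hxy hyx
        | rfl

instance [Fintype Q₁] [Fintype Q₂] : Fintype (Otimes Q₁ Q₂ r) :=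
  Fintype.ofEquiv (Q₁ ⊕ Fin r ⊕ Q₂)
    { toFun := fun x => match x with
        | Sum.inl a => bot a
        | Sum.inr (Sum.inl i) => mid i
        | Sum.inr (Sum.inr b) => top b
      invFun := fun x => match x with
        | bot a => Sum.inl a
        | mid i => Sum.inr (Sum.inl i)
        | top b => Sum.inr (Sum.inr b)
      left_inv := fun x => by rcases x with a | (i | b) <;> rfl
      right_inv := fun x => by cases x <;> rfl }

end Otimes

/-- `Q ⊕ r`: the poset obtained from `Q` by adding an antichain of `r` new elements,
each above every element of `Q`. -/
inductive Oplus (Q : Type) (r : ℕ) : Type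
  | base : Q → Oplus Q r
  | new : Fin r → Oplus Q r

namespace Oplus

variable {Q : Type} {r : ℕ}

def le [PartialOrder Q] : Oplus Q r → Oplus Q r → Prop
  | base a, base b => a ≤ b
  | base _, new _ => True
  | new i, new j => i = j
  | new _, base _ => False

instance [PartialOrder Q] : PartialOrder (Oplus Q r) where
  le := Oplus.le
  le_refl x := by cases x <;> simp [Oplus.le]
  le_trans x y z hxy hyz := by
    cases x <;> cases y <;> cases z <;> simp_all [Oplus.le] <;>
      first
        | exact le_trans hxy hyz
        | trivial
  le_antisymm x y hxy hyx := by
    cases x <;> cases y <;> simp_all [Oplus.le] <;>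
      first
        | exact le_antisymm hxy hyx
        | rfl

instance [Fintype Q] : Fintype (Oplus Q r) :=
  Fintype.ofEquiv (Q ⊕ Fin r)
    { toFun := fun x => match x with
        | Sum.inl a => base a
        | Sum.inr i => new i
      invFun := fun x => match x with
        | base a => Sum.inl a
        | new i => Sum.inr i
      left_inv := fun x => by rcases x with a | i <;> rfl
      right_inv := fun x => by cases x <;> rfl }

end Oplus

/-- the poset `N`: four elements `a, b, c, d` with `a ≤ c`, `b ≤ c`, `b ≤ d`
and no other nontrivial relations. -/
inductive NPoset : Type
  | a | b | c | d
  deriving DecidableEq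

instance : Fintype NPoset :=
  ⟨{NPoset.a, NPoset.b, NPoset.c, NPoset.d}, fun x => by cases x <;> simp⟩

namespace NPoset

def le : NPoset → NPoset → Prop := fun x y =>
  x = y ∨ (x = a ∧ y = c) ∨ (x = b ∧ y = c) ∨ (x = b ∧ y = d)

instance : DecidableRel le := fun x y => by unfold le; infer_instance

theorem le_refl' : ∀ x : NPoset, le x x := by decide
theorem le_trans' : ∀ x y z : NPoset, le x y → le y z → le x z := by decide
theorem le_antisymm' : ∀ x y : NPoset, le x y → le y x → x = y := by decide

instance : PartialOrder NPoset :=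
  { le := le, le_refl := le_refl', le_trans := le_trans', le_antisymm := le_antisymm' }

end NPoset

/-- the poset `B⁺`: five elements with `a < c`, `a < e`, `b < c`, `b < d`, `d < e`
(and the relation `b < e` forced by transitivity). -/
inductive BPlusPoset : Type
  | a | b | c | d | e
  deriving DecidableEq

instance : Fintype BPlusPoset :=
  ⟨{BPlusPoset.a, BPlusPoset.b, BPlusPoset.c, BPlusPoset.d, BPlusPoset.e}, fun x => by cases x <;> simp⟩

namespace BPlusPoset

def le : BPlusPoset → BPlusPoset → Prop := fun x y =>
  x = y ∨ (x = a ∧ y = c) ∨ (x = a ∧ y = e) ∨ (x = b ∧ y = c) ∨ (x = b ∧ y = d) ∨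
    (x = b ∧ y = e) ∨ (x = d ∧ y = e)

instance : DecidableRel le := fun x y => by unfold le; infer_instance

theorem le_refl' : ∀ x : BPlusPoset, le x x := by decide
theorem le_trans' : ∀ x y z : BPlusPoset, le x y → le y z → le x z := by decide
theorem le_antisymm' : ∀ x y : BPlusPoset, le x y → le y x → x = y := by decide

instance : PartialOrder BPlusPoset :=
  { le := le, le_refl := le_refl', le_trans := le_trans', le_antisymm := le_antisymm' }

end BPlusPoset

/-- the poset `B⁺⁺`: five elements with `a, b < c, d` and `d < e`
(hence also `a < e` and `b < e`). -/
inductive BPlusPlusPoset : Type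
  | a | b | c | d | e
  deriving DecidableEq

instance : Fintype BPlusPlusPoset :=
  ⟨{BPlusPlusPoset.a, BPlusPlusPoset.b, BPlusPlusPoset.c, BPlusPlusPoset.d, BPlusPlusPoset.e}, fun x => by cases x <;> simp⟩

namespace BPlusPlusPoset

def le : BPlusPlusPoset → BPlusPlusPoset → Prop := fun x y =>
  x = y ∨ (x = a ∧ y = c) ∨ (x = a ∧ y = d) ∨ (x = a ∧ y = e) ∨ (x = b ∧ y = c) ∨
    (x = b ∧ y = d) ∨ (x = b ∧ y = e) ∨ (x = d ∧ y = e)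

instance : DecidableRel le := fun x y => by unfold le; infer_instance

theorem le_refl' : ∀ x : BPlusPlusPoset, le x x := by decide
theorem le_trans' : ∀ x y z : BPlusPlusPoset, le x y → le y z → le x z := by decide
theorem le_antisymm' : ∀ x y : BPlusPlusPoset, le x y → le y x → x = y := by decide

instance : PartialOrder BPlusPlusPoset :=
  { le := le, le_refl := le_refl', le_trans := le_trans', le_antisymm := le_antisymm' }

end BPlusPlusPoset

/-- the binary entropy function `h(x) = -x log₂ x - (1-x) log₂ (1-x)`. -/
def binEnt (x : ℝ) : ℝ := -x * Real.logb 2 x - (1 - x) * Real.logb 2 (1 - x)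




-- ===== auxiliary material for statement1 =====






def fiberEquiv {α β ι : Type*} (c : α → ι) (d : β → ι) :
    {σ : α ≃ β // ∀ x, d (σ x) = c x} ≃ ∀ i, {x // c x = i} ≃ {y // d y = i} where
  toFun σ i :=
    { toFun := fun x => ⟨σ.1 x.1, by rw [σ.2, x.2]⟩
      invFun := fun y => ⟨σ.1.symm y.1, by
        have := σ.2 (σ.1.symm y.1); rw [Equiv.apply_symm_apply] at this
        rw [← this, y.2]⟩
      left_inv := fun x => by simp
      right_inv := fun y => by simp }
  invFun e :=
    ⟨(Equiv.sigmaFiberEquiv c).symm.trans ((Equiv.sigmaCongrRight e).trans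
      (Equiv.sigmaFiberEquiv d)), fun x => ((e (c x)) ⟨x, rfl⟩).2⟩
  left_inv := fun σ => by
    apply Subtype.ext; apply Equiv.ext; intro x; rfl
  right_inv := fun e => by
    funext i; apply Equiv.ext; rintro ⟨x, hx⟩
    subst hx; rfl

lemma card_cond_perm {α β ι : Type*} [Fintype α] [Fintype β] [Fintype ι]
    (c : α → ι) (d : β → ι)
    (h : ∀ i, Nat.card {x // c x = i} = Nat.card {y // d y = i}) :
    Nat.card {σ : α ≃ β // ∀ x, d (σ x) = c x}
      = ∏ i : ι, (Nat.card {x // c x = i}).factorial := by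
  classical
  rw [Nat.card_congr (fiberEquiv c d), Nat.card_pi]
  refine Finset.prod_congr rfl fun i _ => ?_
  have e : {x // c x = i} ≃ {y // d y = i} := by
    apply Fintype.equivOfCardEq
    rw [← Nat.card_eq_fintype_card, ← Nat.card_eq_fintype_card]; exact h i
  rw [Nat.card_eq_fintype_card, Fintype.card_equiv e, Nat.card_eq_fintype_card]

/-- `S` lies on the maximal chain determined by `σ`. -/
def onChain {n : ℕ} (σ : Equiv.Perm (Fin n)) (S : Finset (Fin n)) : Prop :=
  ∀ k : Fin n, σ k ∈ S ↔ (k : ℕ) < S.card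

lemma onChain_nested {n : ℕ} {σ : Equiv.Perm (Fin n)} {S T : Finset (Fin n)}
    (hS : onChain σ S) (hT : onChain σ T) : S ⊆ T ∨ T ⊆ S := by
  rcases le_or_gt S.card T.card with h | h
  · left; intro x hx
    have h1 : ((σ.symm x : Fin n) : ℕ) < S.card := (hS (σ.symm x)).mp (by simpa using hx)
    have := (hT (σ.symm x)).mpr (lt_of_lt_of_le h1 h)
    simpa using this
  · right; intro x hx
    have h1 : ((σ.symm x : Fin n) : ℕ) < T.card := (hT (σ.symm x)).mp (by simpa using hx)
    have := (hS (σ.symm x)).mpr (lt_of_lt_of_le h1 h.le)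
    simpa using this

lemma card_filter_val_lt {n : ℕ} (a : ℕ) (ha : a ≤ n) :
    ((univ : Finset (Fin n)).filter fun k : Fin n => (k : ℕ) < a).card = a := by
  have h : ∀ m ∈ Finset.range a, m < n := fun m hm => lt_of_lt_of_le (mem_range.mp hm) ha
  have heq : ((univ : Finset (Fin n)).filter fun k : Fin n => (k : ℕ) < a)
      = (Finset.range a).attachFin h := by
    ext k
    simp only [Finset.mem_filter, Finset.mem_univ, true_and, Finset.mem_attachFin,
      Finset.mem_range]
  rw [heq, Finset.card_attachFin, Finset.card_range]

lemma card_onChain_pair {n : ℕ} (A B : Finset (Fin n)) (hAB : A ⊆ B) :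
    ((univ : Finset (Equiv.Perm (Fin n))).filter
        fun σ => onChain σ A ∧ onChain σ B).card
      = A.card.factorial * ((B.card - A.card).factorial * (n - B.card).factorial) := by
  classical
  have hab : A.card ≤ B.card := Finset.card_le_card hAB
  have hbn : B.card ≤ n := by
    have := Finset.card_le_univ B
    simpa using this
  set c : Fin n → Fin 3 := fun k => if (k : ℕ) < A.card then 0 else if (k : ℕ) < B.card then 1 else 2
    with hc
  set d : Fin n → Fin 3 := fun x => if x ∈ A then 0 else if x ∈ B then 1 else 2 with hd
  have hd0 : ∀ x, d x = 0 ↔ x ∈ A := by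
    intro x; simp only [hd]; split_ifs with h1 h2
    · exact iff_of_true rfl h1
    · exact iff_of_false (by decide) h1
    · exact iff_of_false (by decide) h1
  have hd2 : ∀ x, d x = 2 ↔ x ∉ B := by
    intro x; simp only [hd]; split_ifs with h1 h2
    · exact iff_of_false (by decide) (by simp [hAB h1])
    · exact iff_of_false (by decide) (by simp [h2])
    · exact iff_of_true rfl h2
  have hc0 : ∀ k : Fin n, c k = 0 ↔ (k : ℕ) < A.card := by
    intro k; simp only [hc]; split_ifs with h1 h2
    · exact iff_of_true rfl h1
    · exact iff_of_false (by decide) h1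
    · exact iff_of_false (by decide) h1
  have hc2 : ∀ k : Fin n, c k = 2 ↔ ¬ (k : ℕ) < B.card := by
    intro k; simp only [hc]; split_ifs with h1 h2
    · exact iff_of_false (by decide) (by omega)
    · exact iff_of_false (by decide) (by omega)
    · exact iff_of_true rfl h2
  have hiff : ∀ σ : Equiv.Perm (Fin n),
      (onChain σ A ∧ onChain σ B) ↔ ∀ x, d (σ x) = c x := by
    intro σ
    constructor
    · rintro ⟨hA, hB⟩ k
      have h1 : σ k ∈ A ↔ (k : ℕ) < A.card := hA k
      have h2 : σ k ∈ B ↔ (k : ℕ) < B.card := hB k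
      simp only [hc, hd]
      by_cases hka : (k : ℕ) < A.card
      · rw [if_pos (h1.mpr hka), if_pos hka]
      · rw [if_neg (fun h => hka (h1.mp h)), if_neg hka]
        by_cases hkb : (k : ℕ) < B.card
        · rw [if_pos (h2.mpr hkb), if_pos hkb]
        · rw [if_neg (fun h => hkb (h2.mp h)), if_neg hkb]
    · intro h
      constructor
      · intro k; rw [← hd0 (σ k), h k, hc0]
      · intro k
        have := (hd2 (σ k)).not.trans (not_not)
        rw [← this, h k, (hc2 k).not, not_not]
  have hcard0 : Nat.card {k : Fin n // c k = 0} = A.card := by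
    rw [Nat.card_eq_fintype_card, Fintype.card_subtype]
    rw [show ((univ : Finset (Fin n)).filter fun k => c k = 0)
        = (univ.filter fun k : Fin n => (k : ℕ) < A.card) from by
          ext k; simp only [mem_filter, mem_univ, true_and, hc0 k],
      card_filter_val_lt A.card (le_trans hab hbn)]
  have hcard1 : Nat.card {k : Fin n // c k = 1} = B.card - A.card := by
    rw [Nat.card_eq_fintype_card, Fintype.card_subtype]
    have hsub : (univ.filter fun k : Fin n => (k : ℕ) < A.card)
        ⊆ (univ.filter fun k : Fin n => (k : ℕ) < B.card) := by
      intro k; simp only [mem_filter, mem_univ, true_and]; omega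
    have heq : ((univ : Finset (Fin n)).filter fun k => c k = 1)
        = (univ.filter fun k : Fin n => (k : ℕ) < B.card)
          \ (univ.filter fun k : Fin n => (k : ℕ) < A.card) := by
      ext k
      have h0 := hc0 k; have h2 := hc2 k
      simp only [mem_sdiff, mem_filter, mem_univ, true_and]
      constructor
      · intro h1
        have hn0 : c k ≠ 0 := by rw [h1]; decide
        have hna : ¬ (k : ℕ) < A.card := fun hh => hn0 (h0.mpr hh)
        have hn2 : c k ≠ 2 := by rw [h1]; decide
        have hb' : (k : ℕ) < B.card := by by_contra hh; exact hn2 (h2.mpr hh)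
        exact ⟨hb', hna⟩
      · rintro ⟨hkb, hka⟩
        simp only [hc]; rw [if_neg hka, if_pos hkb]
    rw [heq, Finset.card_sdiff_of_subset hsub, card_filter_val_lt A.card (le_trans hab hbn),
      card_filter_val_lt B.card hbn]
  have hcard2 : Nat.card {k : Fin n // c k = 2} = n - B.card := by
    rw [Nat.card_eq_fintype_card, Fintype.card_subtype]
    have heq : ((univ : Finset (Fin n)).filter fun k => c k = 2)
        = univ \ (univ.filter fun k : Fin n => (k : ℕ) < B.card) := by
      ext k
      simp only [mem_sdiff, mem_filter, mem_univ, true_and, hc2 k]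
    rw [heq, Finset.card_sdiff_of_subset (Finset.filter_subset _ _),
      card_filter_val_lt B.card hbn, Finset.card_univ, Fintype.card_fin]
  have hdcard0 : Nat.card {x : Fin n // d x = 0} = A.card := by
    rw [Nat.card_eq_fintype_card, Fintype.card_subtype]
    rw [show ((univ : Finset (Fin n)).filter fun x => d x = 0) = A from by
      ext x; simp only [mem_filter, mem_univ, true_and, hd0 x]]
  have hdcard1 : Nat.card {x : Fin n // d x = 1} = B.card - A.card := by
    rw [Nat.card_eq_fintype_card, Fintype.card_subtype]
    have heq : ((univ : Finset (Fin n)).filter fun x => d x = 1) = B \ A := by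
      ext x
      have h0 := hd0 x; have h2 := hd2 x
      simp only [mem_sdiff, mem_filter, mem_univ, true_and]
      constructor
      · intro hx'
        have hn0 : d x ≠ 0 := by rw [hx']; decide
        have hna : x ∉ A := fun hh => hn0 (h0.mpr hh)
        have hn2 : d x ≠ 2 := by rw [hx']; decide
        have hxB : x ∈ B := by by_contra hh; exact hn2 (h2.mpr hh)
        exact ⟨hxB, hna⟩
      · rintro ⟨hxB, hxA⟩
        simp only [hd]; rw [if_neg hxA, if_pos hxB]
    rw [heq, Finset.card_sdiff_of_subset hAB]
  have hdcard2 : Nat.card {x : Fin n // d x = 2} = n - B.card := by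
    rw [Nat.card_eq_fintype_card, Fintype.card_subtype]
    have heq : ((univ : Finset (Fin n)).filter fun x => d x = 2) = Bᶜ := by
      ext x; simp only [mem_filter, mem_univ, true_and, hd2 x, Finset.mem_compl]
    rw [heq, Finset.card_compl, Fintype.card_fin]
  have hfin3 : ∀ i : Fin 3, i = 0 ∨ i = 1 ∨ i = 2 := by decide
  have hmain := card_cond_perm c d (by
    intro i
    rcases hfin3 i with rfl | rfl | rfl
    · rw [hcard0, hdcard0]
    · rw [hcard1, hdcard1]
    · rw [hcard2, hdcard2])
  have hfl : ((univ : Finset (Equiv.Perm (Fin n))).filter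
      fun σ => onChain σ A ∧ onChain σ B).card
      = Nat.card {σ : Equiv.Perm (Fin n) // ∀ x, d (σ x) = c x} := by
    rw [Nat.card_eq_fintype_card, Fintype.card_subtype]
    congr 1
    ext σ
    simp only [mem_filter, mem_univ, true_and]
    exact hiff σ
  rw [hfl, hmain, Fin.prod_univ_three, hcard0, hcard1, hcard2, mul_assoc]

lemma onChain_univ {n : ℕ} (σ : Equiv.Perm (Fin n)) : onChain σ (univ : Finset (Fin n)) := by
  intro k; simp [Finset.card_univ]

lemma card_onChain_single {n : ℕ} (A : Finset (Fin n)) :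
    ((univ : Finset (Equiv.Perm (Fin n))).filter fun σ => onChain σ A).card
      = A.card.factorial * (n - A.card).factorial := by
  have h := card_onChain_pair A univ (Finset.subset_univ A)
  simp only [Finset.card_univ, Fintype.card_fin, Nat.sub_self, Nat.factorial_zero, mul_one]
    at h
  rw [← h]
  congr 1
  ext σ
  simp [onChain_univ σ]




lemma nat_le_choose (m k : ℕ) (h1 : 1 ≤ k) (h2 : k < m) : m ≤ m.choose k := by
  induction m with
  | zero => omega
  | succ m ih =>
    have hk : k ≤ m := by omega
    rcases eq_or_lt_of_le hk with rfl | hlt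
    · rw [Nat.choose_succ_self_right]
    · have h3 := ih hlt
      obtain ⟨j, rfl⟩ : ∃ j, k = j + 1 := ⟨k - 1, by omega⟩
      rw [Nat.choose_succ_succ]
      have hpos : 0 < m.choose j := Nat.choose_pos (by omega)
      simp only [Nat.succ_eq_add_one] at *
      omega

lemma key_ineq (n a b : ℕ) (hab : a < b) (hbn : b ≤ n) :
    n.factorial + (n-1).choose ((n-1)/2)
        * (a.factorial * ((b-a).factorial * (n-b).factorial))
      ≤ (n-1).choose ((n-1)/2)
        * (a.factorial * (n-a).factorial + b.factorial * (n-b).factorial) := by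
  set M := (n-1).choose ((n-1)/2) with hM
  have hMpos : 0 < M := Nat.choose_pos (Nat.div_le_self _ _)
  rcases eq_or_lt_of_le hbn with rfl | hbn'
  · -- b = n
    have h0 : (b - b).factorial = 1 := by simp
    rw [h0]
    have : a.factorial * ((b-a).factorial * 1) ≤ a.factorial * (b-a).factorial := by
      simp
    calc b.factorial + M * (a.factorial * ((b-a).factorial * 1))
        = b.factorial + M * (a.factorial * (b-a).factorial) := by ring_nf
      _ ≤ M * b.factorial + M * (a.factorial * (b-a).factorial) := by
          have : b.factorial ≤ M * b.factorial := Nat.le_mul_of_pos_left _ hMpos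
          omega
      _ = M * (a.factorial * (b-a).factorial + b.factorial * 1) := by ring
  · -- b < n
    set p := (n-1).factorial with hp
    have hb1 : 1 ≤ b := by omega
    -- fact 1 : p ≤ M * (a! * (n-1-a)!)
    have f1 : p ≤ M * (a.factorial * (n-1-a).factorial) := by
      have h := Nat.choose_mul_factorial_mul_factorial (show a ≤ n-1 by omega)
      have hle : (n-1).choose a ≤ M := Nat.choose_le_middle a (n-1)
      calc p = (n-1).choose a * a.factorial * (n-1-a).factorial := h.symm
        _ ≤ M * a.factorial * (n-1-a).factorial :=
            Nat.mul_le_mul_right _ (Nat.mul_le_mul_right _ hle)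
        _ = M * (a.factorial * (n-1-a).factorial) := by ring
    -- fact 2 : p * b ≤ M * (b! * (n-b)!)
    have f2 : p * b ≤ M * (b.factorial * (n-b).factorial) := by
      have h := Nat.choose_mul_factorial_mul_factorial (show b-1 ≤ n-1 by omega)
      have he : n - 1 - (b - 1) = n - b := by omega
      rw [he] at h
      have hle : (n-1).choose (b-1) ≤ M := Nat.choose_le_middle (b-1) (n-1)
      have hbf : b.factorial = b * (b-1).factorial := by
        conv_lhs => rw [show b = (b-1) + 1 by omega]
        rw [Nat.factorial_succ]
        congr 1
        omega
      calc p * b = ((n-1).choose (b-1) * (b-1).factorial * (n-b).factorial) * b := by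
            rw [h]
        _ ≤ (M * (b-1).factorial * (n-b).factorial) * b := by
            exact Nat.mul_le_mul_right _
              (Nat.mul_le_mul_right _ (Nat.mul_le_mul_right _ hle))
        _ = M * ((b * (b-1).factorial) * (n-b).factorial) := by ring
        _ = M * (b.factorial * (n-b).factorial) := by rw [← hbf]
    -- fact 3 : (n-a)! expansion and sub bound
    have hnaf : (n-a).factorial = (n-a) * (n-1-a).factorial := by
      conv_lhs => rw [show n - a = (n-1-a) + 1 by omega]
      rw [Nat.factorial_succ]
      congr 1
      omega
    have f3 : a.factorial * ((b-a).factorial * (n-b).factorial) * (n-a)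
        ≤ a.factorial * (n-a).factorial := by
      have h4 : n - a ≤ (n-a).choose (b-a) :=
        nat_le_choose (n-a) (b-a) (by omega) (by omega)
      have h5 := Nat.choose_mul_factorial_mul_factorial (show b-a ≤ n-a by omega)
      have he : n - a - (b - a) = n - b := by omega
      rw [he] at h5
      calc a.factorial * ((b-a).factorial * (n-b).factorial) * (n-a)
          ≤ a.factorial * ((b-a).factorial * (n-b).factorial) * ((n-a).choose (b-a)) :=
            Nat.mul_le_mul_left _ h4
        _ = a.factorial * ((n-a).choose (b-a) * (b-a).factorial * (n-b).factorial) := by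
            ring
        _ = a.factorial * (n-a).factorial := by rw [h5]
    -- abbreviations
    set S := M * (a.factorial * ((b-a).factorial * (n-b).factorial)) with hS
    set A1 := M * (a.factorial * (n-1-a).factorial) with hA1
    set B1 := M * (b.factorial * (n-b).factorial) with hB1
    have hSA : S ≤ A1 := by
      have h6 : S * (n-a) ≤ A1 * (n-a) := by
        calc S * (n-a) = M * (a.factorial * ((b-a).factorial * (n-b).factorial) * (n-a)) := by
              rw [hS]; ring
          _ ≤ M * (a.factorial * (n-a).factorial) := Nat.mul_le_mul_left _ f3
          _ = A1 * (n-a) := by rw [hA1, hnaf]; ring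
      exact Nat.le_of_mul_le_mul_right h6 (by omega)
    have hMA : M * (a.factorial * (n-a).factorial) = A1 * (n-a) := by
      rw [hA1, hnaf]; ring
    have hnfact : n.factorial = p * n := by
      rw [hp]
      conv_lhs => rw [show n = (n-1) + 1 by omega]
      rw [Nat.factorial_succ]
      rw [show n - 1 + 1 = n by omega]
      ring
    -- main chain
    have hstep : p * n ≤ p * (n - a - 1) + p * b := by
      have : n ≤ (n - a - 1) + b := by omega
      calc p * n ≤ p * ((n - a - 1) + b) := Nat.mul_le_mul_left _ this
        _ = p * (n - a - 1) + p * b := by ring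
    have hA1split : A1 * (n-a) = A1 * (n - a - 1) + A1 := by
      have h9 : (n - a - 1) + 1 = n - a := by omega
      calc A1 * (n-a) = A1 * ((n - a - 1) + 1) := by rw [h9]
        _ = A1 * (n - a - 1) + A1 := by ring
    have h7 : p * (n - a - 1) ≤ A1 * (n - a - 1) := Nat.mul_le_mul_right _ f1
    calc n.factorial + S = p * n + S := by rw [hnfact]
      _ ≤ (p * (n-a-1) + p * b) + S := by omega
      _ ≤ (A1 * (n-a-1) + B1) + A1 := by
          have := f2
          omega
      _ = A1 * (n-a) + B1 := by rw [hA1split]; ring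
      _ = M * (a.factorial * (n-a).factorial + b.factorial * (n-b).factorial) := by
          rw [← hMA, hB1]; ring
-- characterizations
lemma isCopy_chain2_iff {n : ℕ} (G : Finset (Finset (Fin n))) :
    IsCopy (PChain 2) G ↔ ∃ A B : Finset (Fin n), A ⊆ B ∧ A ≠ B ∧ G = {A, B} := by
  constructor
  · rintro ⟨φ, hinj, himg, hmono⟩
    refine ⟨φ 0, φ 1, hmono 0 1 (by norm_num), fun h => ?_, ?_⟩
    · exact absurd (hinj h) (by decide)
    · rw [← himg]
      have : (univ : Finset (PChain 2)) = {0, 1} := by decide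
      rw [this]
      simp [Finset.image_insert]
  · rintro ⟨A, B, hAB, hne, rfl⟩
    refine ⟨fun i => if i = 0 then A else B, ?_, ?_, ?_⟩
    · intro x y hxy
      fin_cases x <;> fin_cases y <;>
        first
          | rfl
          | (simp only [show (0 : PChain 2) = 0 from rfl, if_pos, if_neg, reduceIte] at hxy
             first
               | exact absurd hxy hne
               | exact absurd hxy.symm hne)
    · have : (univ : Finset (PChain 2)) = {0, 1} := by decide
      rw [this]
      simp
    · intro x y hxy
      fin_cases x <;> fin_cases y <;> simp_all

instance veeDecEq : DecidableEq (VeePoset 2) :=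
  inferInstanceAs (DecidableEq (Σ i, Fin (![1,2] i)))
instance wedgeDecEq : DecidableEq (WedgePoset 2) :=
  inferInstanceAs (DecidableEq (Σ i, Fin (![2,1] i)))

def vee0 : VeePoset 2 := ⟨0, ⟨0, by decide⟩⟩
def vee1 : VeePoset 2 := ⟨1, ⟨0, by decide⟩⟩
def vee2 : VeePoset 2 := ⟨1, ⟨1, by decide⟩⟩

def wg0 : WedgePoset 2 := ⟨0, ⟨0, by decide⟩⟩
def wg1 : WedgePoset 2 := ⟨0, ⟨1, by decide⟩⟩
def wg2 : WedgePoset 2 := ⟨1, ⟨0, by decide⟩⟩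

lemma vee_cases (x : VeePoset 2) : x = vee0 ∨ x = vee1 ∨ x = vee2 := by
  revert x; decide

lemma wg_cases (x : WedgePoset 2) : x = wg0 ∨ x = wg1 ∨ x = wg2 := by
  revert x; decide

lemma vee_univ : (Finset.univ : Finset (VeePoset 2)) = {vee0, vee1, vee2} := by decide

lemma wg_univ : (Finset.univ : Finset (WedgePoset 2)) = {wg0, wg1, wg2} := by decide

lemma vee_le01 : vee0 ≤ vee1 := Or.inr (by decide)
lemma vee_le02 : vee0 ≤ vee2 := Or.inr (by decide)
lemma wg_le02 : wg0 ≤ wg2 := Or.inr (by decide)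
lemma wg_le12 : wg1 ≤ wg2 := Or.inr (by decide)

lemma isCopy_vee_intro {n : ℕ} {A B C : Finset (Fin n)} (hAB : A ⊆ B) (hAC : A ⊆ C)
    (h1 : A ≠ B) (h2 : A ≠ C) (h3 : B ≠ C) : IsCopy (VeePoset 2) ({A, B, C} : Finset _) := by
  set φ : VeePoset 2 → Finset (Fin n) :=
    fun x => if x.1 = 0 then A else if (x.2 : ℕ) = 0 then B else C with hφ
  have e0 : φ vee0 = A := rfl
  have e1 : φ vee1 = B := rfl
  have e2 : φ vee2 = C := rfl
  refine ⟨φ, ?_, ?_, ?_⟩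
  · intro x y hxy
    rcases vee_cases x with rfl | rfl | rfl <;> rcases vee_cases y with rfl | rfl | rfl <;>
      first
        | rfl
        | (rw [e0, e1] at hxy; first | exact absurd hxy h1 | exact absurd hxy.symm h1)
        | (rw [e0, e2] at hxy; first | exact absurd hxy h2 | exact absurd hxy.symm h2)
        | (rw [e1, e2] at hxy; first | exact absurd hxy h3 | exact absurd hxy.symm h3)
        | (rw [e2, e1] at hxy; exact absurd hxy h3.symm)
        | (rw [e1, e0] at hxy; exact absurd hxy h1.symm)
        | (rw [e2, e0] at hxy; exact absurd hxy h2.symm)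
  · rw [vee_univ]
    rw [show ({vee0, vee1, vee2} : Finset (VeePoset 2)) = insert vee0 (insert vee1 {vee2})
      from rfl]
    rw [Finset.image_insert, Finset.image_insert, Finset.image_singleton, e0, e1, e2]
  · intro x y hxy
    have h' : x = y ∨ x.1 < y.1 := hxy
    rcases h' with rfl | h'
    · exact subset_rfl
    · rcases vee_cases x with rfl | rfl | rfl <;> rcases vee_cases y with rfl | rfl | rfl <;>
        first
          | exact absurd h' (by decide)
          | (rw [e0, e1]; exact hAB)
          | (rw [e0, e2]; exact hAC)

lemma isCopy_wedge_intro {n : ℕ} {A B C : Finset (Fin n)} (hAC : A ⊆ C) (hBC : B ⊆ C)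
    (h1 : A ≠ B) (h2 : A ≠ C) (h3 : B ≠ C) : IsCopy (WedgePoset 2) ({A, B, C} : Finset _) := by
  set φ : WedgePoset 2 → Finset (Fin n) :=
    fun x => if x.1 = 1 then C else if (x.2 : ℕ) = 0 then A else B with hφ
  have e0 : φ wg0 = A := rfl
  have e1 : φ wg1 = B := rfl
  have e2 : φ wg2 = C := rfl
  refine ⟨φ, ?_, ?_, ?_⟩
  · intro x y hxy
    rcases wg_cases x with rfl | rfl | rfl <;> rcases wg_cases y with rfl | rfl | rfl <;>
      first
        | rfl
        | (rw [e0, e1] at hxy; first | exact absurd hxy h1 | exact absurd hxy.symm h1)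
        | (rw [e0, e2] at hxy; first | exact absurd hxy h2 | exact absurd hxy.symm h2)
        | (rw [e1, e2] at hxy; first | exact absurd hxy h3 | exact absurd hxy.symm h3)
        | (rw [e2, e1] at hxy; exact absurd hxy h3.symm)
        | (rw [e1, e0] at hxy; exact absurd hxy h1.symm)
        | (rw [e2, e0] at hxy; exact absurd hxy h2.symm)
  · rw [wg_univ]
    rw [show ({wg0, wg1, wg2} : Finset (WedgePoset 2)) = insert wg0 (insert wg1 {wg2})
      from rfl]
    rw [Finset.image_insert, Finset.image_insert, Finset.image_singleton, e0, e1, e2]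
  · intro x y hxy
    have h' : x = y ∨ x.1 < y.1 := hxy
    rcases h' with rfl | h'
    · exact subset_rfl
    · rcases wg_cases x with rfl | rfl | rfl <;> rcases wg_cases y with rfl | rfl | rfl <;>
        first
          | exact absurd h' (by decide)
          | (rw [e0, e2]; exact hAC)
          | (rw [e1, e2]; exact hBC)

lemma isCopy_vee_elim {n : ℕ} {G : Finset (Finset (Fin n))} (h : IsCopy (VeePoset 2) G) :
    ∃ A B C : Finset (Fin n), A ∈ G ∧ B ∈ G ∧ C ∈ G ∧ A ≠ B ∧ A ≠ C ∧ B ≠ C ∧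
      A ⊆ B ∧ A ⊆ C := by
  obtain ⟨φ, hinj, himg, hmono⟩ := h
  have hmem : ∀ x : VeePoset 2, φ x ∈ G := fun x => by
    rw [← himg]; exact Finset.mem_image_of_mem φ (Finset.mem_univ x)
  refine ⟨φ vee0, φ vee1, φ vee2, hmem _, hmem _, hmem _, ?_, ?_, ?_,
    hmono _ _ vee_le01, hmono _ _ vee_le02⟩
  · intro h; exact absurd (hinj h) (by decide)
  · intro h; exact absurd (hinj h) (by decide)
  · intro h; exact absurd (hinj h) (by decide)

lemma isCopy_wedge_elim {n : ℕ} {G : Finset (Finset (Fin n))} (h : IsCopy (WedgePoset 2) G) :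
    ∃ A B C : Finset (Fin n), A ∈ G ∧ B ∈ G ∧ C ∈ G ∧ A ≠ B ∧ A ≠ C ∧ B ≠ C ∧
      A ⊆ C ∧ B ⊆ C := by
  obtain ⟨φ, hinj, himg, hmono⟩ := h
  have hmem : ∀ x : WedgePoset 2, φ x ∈ G := fun x => by
    rw [← himg]; exact Finset.mem_image_of_mem φ (Finset.mem_univ x)
  refine ⟨φ wg0, φ wg1, φ wg2, hmem _, hmem _, hmem _, ?_, ?_, ?_,
    hmono _ _ wg_le02, hmono _ _ wg_le12⟩
  · intro h; exact absurd (hinj h) (by decide)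
  · intro h; exact absurd (hinj h) (by decide)
  · intro h; exact absurd (hinj h) (by decide)

-- structural consequence of freeness
lemma master_free {n : ℕ} {F : Finset (Finset (Fin n))}
    (hV : copyCount (VeePoset 2) F = 0) (hW : copyCount (WedgePoset 2) F = 0)
    {S T U : Finset (Fin n)} (hS : S ∈ F) (hT : T ∈ F) (hU : U ∈ F)
    (h1 : T ≠ S) (h2 : U ≠ S) (h3 : T ≠ U)
    (c1 : S ⊆ T ∨ T ⊆ S) (c2 : S ⊆ U ∨ U ⊆ S) : False := by
  have hVf : ∀ G ∈ F.powerset, ¬ IsCopy (VeePoset 2) G := by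
    intro G hG hcopy
    have hmem : G ∈ F.powerset.filter fun G => IsCopy (VeePoset 2) G :=
      Finset.mem_filter.mpr ⟨hG, hcopy⟩
    unfold copyCount at hV
    rw [Finset.card_eq_zero] at hV
    rw [hV] at hmem
    exact absurd hmem (Finset.notMem_empty G)
  have hWf : ∀ G ∈ F.powerset, ¬ IsCopy (WedgePoset 2) G := by
    intro G hG hcopy
    have hmem : G ∈ F.powerset.filter fun G => IsCopy (WedgePoset 2) G :=
      Finset.mem_filter.mpr ⟨hG, hcopy⟩
    unfold copyCount at hW
    rw [Finset.card_eq_zero] at hW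
    rw [hW] at hmem
    exact absurd hmem (Finset.notMem_empty G)
  have hsub : ∀ X Y Z : Finset (Fin n), X ∈ F → Y ∈ F → Z ∈ F →
      ({X, Y, Z} : Finset (Finset (Fin n))) ∈ F.powerset := by
    intro X Y Z hX hY hZ
    rw [Finset.mem_powerset]
    intro W hW'
    simp only [Finset.mem_insert, Finset.mem_singleton] at hW'
    rcases hW' with rfl | rfl | rfl <;> assumption
  rcases c1 with c1 | c1 <;> rcases c2 with c2 | c2
  · exact hVf _ (hsub S T U hS hT hU)
      (isCopy_vee_intro c1 c2 (fun h => h1 h.symm) (fun h => h2 h.symm) h3)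
  · -- S ⊆ T, U ⊆ S : U ⊆ S, U ⊆ T
    exact hVf _ (hsub U S T hU hS hT)
      (isCopy_vee_intro c2 (c2.trans c1) h2 (fun h => h3 h.symm) (fun h => h1 h.symm))
  · -- T ⊆ S, S ⊆ U : T ⊆ S, T ⊆ U
    exact hVf _ (hsub T S U hT hS hU)
      (isCopy_vee_intro c1 (c1.trans c2) h1 h3 (fun h => h2 h.symm))
  · -- T ⊆ S, U ⊆ S
    exact hWf _ (hsub T U S hT hU hS)
      (isCopy_wedge_intro c1 c2 h3 h1 h2)

lemma pair_partner {n : ℕ} {A B S : Finset (Fin n)} (hAB : A ⊆ B) (hne : A ≠ B)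
    (hS : S ∈ ({A, B} : Finset (Finset (Fin n)))) :
    ∃ T, (S ⊆ T ∨ T ⊆ S) ∧ T ≠ S ∧ ({A, B} : Finset (Finset (Fin n))) = {S, T} := by
  simp only [Finset.mem_insert, Finset.mem_singleton] at hS
  rcases hS with rfl | rfl
  · exact ⟨B, Or.inl hAB, fun h => hne h.symm, rfl⟩
  · exact ⟨A, Or.inr hAB, hne, Finset.pair_comm A S⟩

lemma upper_bound {n : ℕ} (F : Finset (Finset (Fin n)))
    (hV : copyCount (VeePoset 2) F = 0) (hW : copyCount (WedgePoset 2) F = 0) :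
    copyCount (PChain 2) F ≤ (n-1).choose ((n-1)/2) := by
  classical
  set M := (n-1).choose ((n-1)/2) with hM
  set P := F.powerset.filter (fun G => IsCopy (PChain 2) G) with hP
  have hcc : copyCount (PChain 2) F = P.card := rfl
  set W : Finset (Finset (Fin n)) → Finset (Equiv.Perm (Fin n)) :=
    fun G => Finset.univ.filter (fun σ => ∃ S ∈ G, onChain σ S) with hWdef
  -- structure of members of P
  have hstruct : ∀ G ∈ P, ∃ A B : Finset (Fin n), A ⊆ B ∧ A ≠ B ∧ G = {A, B} ∧ G ⊆ F := by
    intro G hG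
    rw [hP, Finset.mem_filter, Finset.mem_powerset] at hG
    obtain ⟨A, B, h1, h2, h3⟩ := (isCopy_chain2_iff G).mp hG.2
    exact ⟨A, B, h1, h2, h3, hG.1⟩
  -- per-pair lower bound on the number of permutations
  have hper : ∀ G ∈ P, n.factorial ≤ M * (W G).card := by
    intro G hG
    obtain ⟨A, B, hAB, hne, rfl, hGF⟩ := hstruct G hG
    have hablt : A.card < B.card :=
      Finset.card_lt_card (HasSubset.Subset.ssubset_of_ne hAB hne)
    have hbn : B.card ≤ n := by
      have := Finset.card_le_univ B; simpa using this
    have hWeq : W {A, B} = (Finset.univ.filter fun σ => onChain σ A)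
        ∪ (Finset.univ.filter fun σ => onChain σ B) := by
      rw [hWdef, ← Finset.filter_or]
      ext σ
      simp only [Finset.mem_filter, Finset.mem_univ, true_and,
        Finset.mem_insert, Finset.mem_singleton]
      constructor
      · rintro ⟨S, rfl | rfl, h⟩
        · exact Or.inl h
        · exact Or.inr h
      · rintro (h | h)
        · exact ⟨A, Or.inl rfl, h⟩
        · exact ⟨B, Or.inr rfl, h⟩
    have hinter : (Finset.univ.filter fun σ => onChain σ A)
        ∩ (Finset.univ.filter fun σ => onChain σ B)
        = Finset.univ.filter fun σ => onChain σ A ∧ onChain σ B := by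
      rw [Finset.filter_and]
    have hcards := Finset.card_union_add_card_inter
      (Finset.univ.filter fun σ => onChain σ A)
      (Finset.univ.filter fun σ => onChain σ B)
    rw [hinter, card_onChain_pair A B hAB] at hcards
    rw [card_onChain_single A, card_onChain_single B] at hcards
    have hkey := key_ineq n A.card B.card hablt hbn
    rw [← hM] at hkey
    have heq2 : (W {A, B}).card
        + A.card.factorial * ((B.card - A.card).factorial * (n - B.card).factorial)
        = A.card.factorial * (n - A.card).factorial
          + B.card.factorial * (n - B.card).factorial := by
      rw [hWeq]; exact hcards
    have := calc n.factorial
        + M * (A.card.factorial * ((B.card - A.card).factorial * (n - B.card).factorial))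
        ≤ M * (A.card.factorial * (n - A.card).factorial
            + B.card.factorial * (n - B.card).factorial) := hkey
      _ = M * ((W {A, B}).card
            + A.card.factorial * ((B.card - A.card).factorial * (n - B.card).factorial)) := by
          rw [heq2]
      _ = M * (W {A, B}).card
            + M * (A.card.factorial * ((B.card - A.card).factorial * (n - B.card).factorial)) := by
          ring
    omega
  -- disjointness
  have hdisj : ∀ G ∈ P, ∀ G' ∈ P, G ≠ G' → Disjoint (W G) (W G') := by
    intro G hG G' hG' hne
    rw [Finset.disjoint_left]
    intro σ hσ hσ'
    obtain ⟨A, B, hAB, hABne, rfl, hGF⟩ := hstruct G hG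
    obtain ⟨A', B', hAB', hABne', rfl, hGF'⟩ := hstruct G' hG'
    rw [hWdef, Finset.mem_filter] at hσ hσ'
    obtain ⟨S, hSG, honS⟩ := hσ.2
    obtain ⟨S', hSG', honS'⟩ := hσ'.2
    obtain ⟨T, hcompT, hTS, hGeq⟩ := pair_partner hAB hABne hSG
    obtain ⟨T', hcompT', hTS', hGeq'⟩ := pair_partner hAB' hABne' hSG'
    have hSF : S ∈ F := hGF hSG
    have hSF' : S' ∈ F := hGF' hSG'
    have hTF : T ∈ F := hGF (by rw [hGeq]; exact Finset.mem_insert_of_mem (Finset.mem_singleton_self T))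
    have hTF' : T' ∈ F := hGF' (by rw [hGeq']; exact Finset.mem_insert_of_mem (Finset.mem_singleton_self T'))
    have hcompSS' : S ⊆ S' ∨ S' ⊆ S := onChain_nested honS honS'
    have hne2 : ({S, T} : Finset (Finset (Fin n))) ≠ {S', T'} := by
      rw [← hGeq, ← hGeq']; exact hne
    by_cases hss : S = S'
    · subst hss
      have hTT' : T ≠ T' := by
        intro h; subst h; exact hne2 rfl
      exact master_free hV hW hSF hTF hTF' hTS hTS' hTT' hcompT hcompT'
    · by_cases hts : T = S'
      · subst hts
        have hST' : S ≠ T' := by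
          intro h; subst h
          exact hne2 (Finset.pair_comm S T)
        exact master_free hV hW hTF hSF hTF' (Ne.symm hTS) hTS' hST' hcompT.symm hcompT'
      · exact master_free hV hW hSF hTF hSF' hTS (fun h => hss h.symm) hts hcompT hcompSS'
  -- summation
  have hsum : ∑ G ∈ P, (W G).card ≤ n.factorial := by
    rw [← Finset.card_biUnion hdisj]
    calc (P.biUnion W).card ≤ Fintype.card (Equiv.Perm (Fin n)) := Finset.card_le_univ _
      _ = n.factorial := by rw [Fintype.card_perm, Fintype.card_fin]
  have hfin : P.card * n.factorial ≤ M * n.factorial := by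
    calc P.card * n.factorial = ∑ _G ∈ P, n.factorial := by
          rw [Finset.sum_const, smul_eq_mul]
      _ ≤ ∑ G ∈ P, M * (W G).card := Finset.sum_le_sum hper
      _ = M * ∑ G ∈ P, (W G).card := by rw [Finset.mul_sum]
      _ ≤ M * n.factorial := Nat.mul_le_mul_left M hsum
  rw [hcc]
  exact Nat.le_of_mul_le_mul_right hfin (Nat.factorial_pos n)

lemma lower_exists {n : ℕ} (hn : 1 ≤ n) : ∃ F : Finset (Finset (Fin n)),
    copyCount (VeePoset 2) F = 0 ∧ copyCount (WedgePoset 2) F = 0 ∧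
    copyCount (PChain 2) F = (n-1).choose ((n-1)/2) := by
  classical
  set t : Fin n := ⟨n-1, by omega⟩ with hht
  set Base : Finset (Fin n) := Finset.univ.erase t with hBase
  set h : ℕ := (n-1)/2 with hh
  set Lev : Finset (Finset (Fin n)) := Finset.powersetCard h Base with hLev
  set F₀ : Finset (Finset (Fin n)) := Lev ∪ Lev.image (insert t) with hF₀
  have hBcard : Base.card = n - 1 := by
    rw [hBase, Finset.card_erase_of_mem (Finset.mem_univ t), Finset.card_univ,
      Fintype.card_fin]
  have hLevCard : Lev.card = (n-1).choose h := by
    rw [hLev, Finset.card_powersetCard, hBcard]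
  have hmemLev : ∀ A, A ∈ Lev ↔ A ⊆ Base ∧ A.card = h := by
    intro A; rw [hLev, Finset.mem_powersetCard]
  have htnot : ∀ A ∈ Lev, t ∉ A := by
    intro A hA ht
    have := ((hmemLev A).mp hA).1 ht
    rw [hBase] at this
    exact absurd rfl (Finset.ne_of_mem_erase this)
  have hinsCard : ∀ A ∈ Lev, (insert t A).card = h + 1 := by
    intro A hA
    rw [Finset.card_insert_of_notMem (htnot A hA), ((hmemLev A).mp hA).2]
  -- structure of comparable pairs in F₀
  have hcomp : ∀ S T, S ∈ F₀ → T ∈ F₀ → S ⊆ T → S ≠ T →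
      ∃ A ∈ Lev, S = A ∧ T = insert t A := by
    intro S T hS hT hsub hne
    rw [hF₀, Finset.mem_union] at hS hT
    rcases hS with hS | hS <;> rcases hT with hT | hT
    · exact absurd (Finset.eq_of_subset_of_card_le hsub
        (by rw [((hmemLev S).mp hS).2, ((hmemLev T).mp hT).2])) hne
    · obtain ⟨A, hA, rfl⟩ := Finset.mem_image.mp hT
      have hsub2 : S ⊆ A := by
        intro x hx
        rcases Finset.mem_insert.mp (hsub hx) with rfl | hxA
        · exact absurd hx (htnot S hS)
        · exact hxA
      have : S = A := Finset.eq_of_subset_of_card_le hsub2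
        (by rw [((hmemLev S).mp hS).2, ((hmemLev A).mp hA).2])
      exact ⟨A, hA, this, rfl⟩
    · obtain ⟨A, hA, rfl⟩ := Finset.mem_image.mp hS
      have htT : t ∈ T := hsub (Finset.mem_insert_self t A)
      exact absurd htT (htnot T hT)
    · obtain ⟨A, hA, rfl⟩ := Finset.mem_image.mp hS
      obtain ⟨A', hA', rfl⟩ := Finset.mem_image.mp hT
      exact absurd (Finset.eq_of_subset_of_card_le hsub
        (by rw [hinsCard A hA, hinsCard A' hA'])) hne
  have hcc0 : ∀ (α : Type) [PartialOrder α] [Fintype α],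
      (∀ G ∈ F₀.powerset, ¬ IsCopy α G) → copyCount α F₀ = 0 := by
    intro α _ _ hno
    unfold copyCount
    rw [Finset.card_eq_zero, Finset.filter_eq_empty_iff]
    exact hno
  refine ⟨F₀, ?_, ?_, ?_⟩
  · -- Vee-free
    apply hcc0
    intro G hG hcopy
    obtain ⟨A, B, C, hAG, hBG, hCG, hAB, hAC, hBC, hsAB, hsAC⟩ := isCopy_vee_elim hcopy
    rw [Finset.mem_powerset] at hG
    obtain ⟨A1, hA1, he1, he2⟩ := hcomp A B (hG hAG) (hG hBG) hsAB hAB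
    obtain ⟨A2, hA2, he3, he4⟩ := hcomp A C (hG hAG) (hG hCG) hsAC hAC
    apply hBC
    rw [he2, he4, ← he1, ← he3]
  · -- Wedge-free
    apply hcc0
    intro G hG hcopy
    obtain ⟨A, B, C, hAm, hBm, hCm, hne1, hne2, hne3, hsAC, hsBC⟩ := isCopy_wedge_elim hcopy
    rw [Finset.mem_powerset] at hG
    obtain ⟨A1, hA1, he1, he2⟩ := hcomp A C (hG hAm) (hG hCm) hsAC hne2
    obtain ⟨A2, hA2, he3, he4⟩ := hcomp B C (hG hBm) (hG hCm) hsBC hne3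
    apply hne1
    have : insert t A1 = insert t A2 := by rw [← he2, he4]
    have hA12 : A1 = A2 := by
      have e1 : (insert t A1).erase t = A1 := Finset.erase_insert (htnot A1 hA1)
      have e2 : (insert t A2).erase t = A2 := Finset.erase_insert (htnot A2 hA2)
      rw [← e1, ← e2, this]
    rw [he1, he3, hA12]
  · -- count of chains
    have hIm : F₀.powerset.filter (fun G => IsCopy (PChain 2) G)
        = Lev.image (fun A => ({A, insert t A} : Finset (Finset (Fin n)))) := by
      ext G
      rw [Finset.mem_filter, Finset.mem_powerset, Finset.mem_image]
      constructor
      · rintro ⟨hGF, hcopy⟩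
        obtain ⟨A', B', hsub, hne, rfl⟩ := (isCopy_chain2_iff G).mp hcopy
        have hA'F : A' ∈ F₀ := hGF (Finset.mem_insert_self _ _)
        have hB'F : B' ∈ F₀ := hGF (Finset.mem_insert_of_mem (Finset.mem_singleton_self _))
        obtain ⟨A, hA, hEqA, hEqB⟩ := hcomp A' B' hA'F hB'F hsub hne
        exact ⟨A, hA, by rw [hEqA, hEqB]⟩
      · rintro ⟨A, hA, rfl⟩
        have hins : A ≠ insert t A := by
          intro hEq
          exact htnot A hA (hEq ▸ Finset.mem_insert_self t A)
        constructor
        · intro S hS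
          rcases Finset.mem_insert.mp hS with rfl | hS
          · rw [hF₀, Finset.mem_union]; exact Or.inl hA
          · rw [Finset.mem_singleton] at hS
            subst hS
            rw [hF₀, Finset.mem_union]
            exact Or.inr (Finset.mem_image_of_mem _ hA)
        · exact (isCopy_chain2_iff _).mpr
            ⟨A, insert t A, Finset.subset_insert t A, hins, rfl⟩
    have hinj : Set.InjOn (fun A => ({A, insert t A} : Finset (Finset (Fin n)))) Lev := by
      intro A hA A' hA' hEq
      simp only at hEq
      have hmem : A ∈ ({A', insert t A'} : Finset (Finset (Fin n))) := by
        rw [← hEq]; exact Finset.mem_insert_self _ _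
      rcases Finset.mem_insert.mp hmem with rfl | hmem
      · rfl
      · rw [Finset.mem_singleton] at hmem
        have hcA : A.card = h + 1 := by
          rw [hmem]; exact hinsCard A' (by simpa using hA')
        have hc1 : A.card = h := ((hmemLev A).mp (by simpa using hA)).2
        have hc2 : A'.card = h := ((hmemLev A').mp (by simpa using hA')).2
        omega
    unfold copyCount
    rw [hIm, Finset.card_image_of_injOn hinj, hLevCard]

theorem statement1 (n : ℕ) (hn : 1 ≤ n) :
    La2 n (VeePoset 2) (WedgePoset 2) (PChain 2) = (n - 1).choose ((n - 1) / 2) := by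
  apply le_antisymm
  · unfold La2
    apply Finset.sup_le
    intro F hF
    rw [Finset.mem_filter] at hF
    exact upper_bound F hF.2.1 hF.2.2
  · obtain ⟨F, hVf, hWf, hcnt⟩ := lower_exists hn
    rw [← hcnt]
    exact Finset.le_sup (f := copyCount (PChain 2))
      (Finset.mem_filter.mpr ⟨Finset.mem_univ F, hVf, hWf⟩)

end
end

section
/- For all integers n ≥ 1 and r ≥ 1, La(n, ∨, ∧_r) = La(n, ∧, ∨_r) = C(C(n, ⌊n/2⌋), r): the maximum number of copies of ∧_r over all ∨-free families ℱ ⊆ 2^[n] (equivalently, of copies of ∨_r over all ∧-free families) equals the binomial coefficient C(M, r) with M = C(n, ⌊n/2⌋). -/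
open Classical Finset

noncomputable section

/-- Case analysis for elements of `KP ![a,b]`. -/
lemma kp_cases {a b : ℕ} (x : KP ![a, b]) :
    (∃ j : Fin a, x = ⟨0, j⟩) ∨ (∃ j : Fin b, x = ⟨1, j⟩) := by
  rcases x with ⟨⟨iv, hi⟩, j⟩
  interval_cases iv
  · exact Or.inl ⟨j, rfl⟩
  · exact Or.inr ⟨j, rfl⟩

lemma kp2_copy_iff {a b n : ℕ} (G : Finset (Finset (Fin n))) :
    IsCopy (KP ![a, b]) G ↔ ∃ S₁ S₂ : Finset (Finset (Fin n)),
      S₁.card = a ∧ S₂.card = b ∧ Disjoint S₁ S₂ ∧ S₁ ∪ S₂ = G ∧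
      ∀ A ∈ S₁, ∀ B ∈ S₂, A ⊆ B := by
  constructor
  · rintro ⟨φ, hinj, himg, hmono⟩
    have hi1 : Function.Injective (fun j : Fin a => φ ⟨0, j⟩) :=
      fun j j' h => by
        have h2 : (⟨0, j⟩ : Σ i : Fin 2, Fin (![a, b] i)) = ⟨0, j'⟩ := hinj h
        exact eq_of_heq (Sigma.mk.inj h2).2
    have hi2 : Function.Injective (fun j : Fin b => φ ⟨1, j⟩) :=
      fun j j' h => by
        have h2 : (⟨1, j⟩ : Σ i : Fin 2, Fin (![a, b] i)) = ⟨1, j'⟩ := hinj h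
        exact eq_of_heq (Sigma.mk.inj h2).2
    refine ⟨Finset.image (fun j : Fin a => φ ⟨0, j⟩) Finset.univ,
            Finset.image (fun j : Fin b => φ ⟨1, j⟩) Finset.univ, ?_, ?_, ?_, ?_, ?_⟩
    · rw [Finset.card_image_of_injective _ hi1, Finset.card_univ, Fintype.card_fin]
    · rw [Finset.card_image_of_injective _ hi2, Finset.card_univ, Fintype.card_fin]
    · rw [Finset.disjoint_left]
      rintro A hA hA'
      simp only [Finset.mem_image, Finset.mem_univ, true_and] at hA hA'
      obtain ⟨j, hj⟩ := hA
      obtain ⟨j', hj'⟩ := hA'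
      have : (⟨0, j⟩ : KP ![a, b]) = ⟨1, j'⟩ := hinj (hj.trans hj'.symm)
      have h01 : (0 : Fin 2) = 1 := congrArg Sigma.fst this
      simp at h01
    · rw [← himg]
      ext A
      simp only [Finset.mem_union, Finset.mem_image, Finset.mem_univ, true_and]
      constructor
      · rintro (⟨j, rfl⟩ | ⟨j, rfl⟩) <;> exact ⟨_, rfl⟩
      · rintro ⟨x, rfl⟩
        rcases kp_cases x with ⟨j, rfl⟩ | ⟨j, rfl⟩
        · exact Or.inl ⟨j, rfl⟩
        · exact Or.inr ⟨j, rfl⟩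
    · rintro A hA B hB
      simp only [Finset.mem_image, Finset.mem_univ, true_and] at hA hB
      obtain ⟨j, rfl⟩ := hA
      obtain ⟨j', rfl⟩ := hB
      exact hmono _ _ (Or.inr (show (0 : Fin 2) < 1 by decide))
  · rintro ⟨S₁, S₂, h₁, h₂, hdisj, huni, hord⟩
    classical
    set ψ₁ : Fin a → Finset (Fin n) :=
      fun j => (S₁.equivFin.symm (finCongr h₁.symm j) : Finset (Fin n)) with hψ₁
    set ψ₂ : Fin b → Finset (Fin n) :=
      fun j => (S₂.equivFin.symm (finCongr h₂.symm j) : Finset (Fin n)) with hψ₂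
    have hm₁ : ∀ j, ψ₁ j ∈ S₁ := fun j => Finset.coe_mem _
    have hm₂ : ∀ j, ψ₂ j ∈ S₂ := fun j => Finset.coe_mem _
    have hinj₁ : Function.Injective ψ₁ :=
      Subtype.coe_injective.comp (S₁.equivFin.symm.injective.comp (finCongr h₁.symm).injective)
    have hinj₂ : Function.Injective ψ₂ :=
      Subtype.coe_injective.comp (S₂.equivFin.symm.injective.comp (finCongr h₂.symm).injective)
    have himg₁ : Finset.image ψ₁ Finset.univ = S₁ := by
      apply Finset.eq_of_subset_of_card_le
      · intro A hA
        simp only [Finset.mem_image, Finset.mem_univ, true_and] at hA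
        obtain ⟨j, rfl⟩ := hA; exact hm₁ j
      · rw [Finset.card_image_of_injective _ hinj₁, Finset.card_univ, Fintype.card_fin, h₁]
    have himg₂ : Finset.image ψ₂ Finset.univ = S₂ := by
      apply Finset.eq_of_subset_of_card_le
      · intro A hA
        simp only [Finset.mem_image, Finset.mem_univ, true_and] at hA
        obtain ⟨j, rfl⟩ := hA; exact hm₂ j
      · rw [Finset.card_image_of_injective _ hinj₂, Finset.card_univ, Fintype.card_fin, h₂]
    obtain ⟨φ, hφ0, hφ1⟩ : ∃ φ : KP ![a, b] → Finset (Fin n),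
        (∀ j : Fin a, φ ⟨0, j⟩ = ψ₁ j) ∧ (∀ j : Fin b, φ ⟨1, j⟩ = ψ₂ j) := by
      refine ⟨fun x => if h : (x.1 : ℕ) = 0 then
          ψ₁ ⟨x.2.val, by
            have he : (![a, b] : Fin 2 → ℕ) x.1 = a := by
              rw [show x.1 = 0 from Fin.ext h]; rfl
            exact lt_of_lt_of_eq x.2.isLt he⟩
        else
          ψ₂ ⟨x.2.val, by
            have hx : x.1 = 1 := by
              have h2 := x.1.isLt
              have : (x.1 : ℕ) = 1 := by omega
              exact Fin.ext (by simpa using this)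
            have he : (![a, b] : Fin 2 → ℕ) x.1 = b := by rw [hx]; rfl
            exact lt_of_lt_of_eq x.2.isLt he⟩, fun j => ?_, fun j => ?_⟩
      · exact dif_pos rfl
      · exact dif_neg (by norm_num)
    refine ⟨φ, ?_, ?_, ?_⟩
    · intro x y hxy
      rcases kp_cases x with ⟨j, rfl⟩ | ⟨j, rfl⟩ <;>
          rcases kp_cases y with ⟨j', rfl⟩ | ⟨j', rfl⟩
      · rw [hφ0, hφ0] at hxy
        exact congrArg _ (hinj₁ hxy)
      · rw [hφ0, hφ1] at hxy
        exact absurd (hxy ▸ hm₁ j) (Finset.disjoint_right.mp hdisj (hm₂ j'))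
      · rw [hφ1, hφ0] at hxy
        exact absurd (hxy ▸ hm₂ j) (Finset.disjoint_left.mp hdisj (hm₁ j'))
      · rw [hφ1, hφ1] at hxy
        exact congrArg _ (hinj₂ hxy)
    · rw [← huni]
      ext A
      simp only [Finset.mem_image, Finset.mem_univ, true_and, Finset.mem_union]
      constructor
      · rintro ⟨x, rfl⟩
        rcases kp_cases x with ⟨j, rfl⟩ | ⟨j, rfl⟩
        · rw [hφ0]; exact Or.inl (hm₁ _)
        · rw [hφ1]; exact Or.inr (hm₂ _)
      · rintro (hA | hA)
        · rw [← himg₁] at hA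
          simp only [Finset.mem_image, Finset.mem_univ, true_and] at hA
          obtain ⟨j, rfl⟩ := hA
          exact ⟨⟨0, j⟩, hφ0 j⟩
        · rw [← himg₂] at hA
          simp only [Finset.mem_image, Finset.mem_univ, true_and] at hA
          obtain ⟨j, rfl⟩ := hA
          exact ⟨⟨1, j⟩, hφ1 j⟩
    · intro x y hxy
      rcases hxy with rfl | hlt
      · exact subset_rfl
      · rcases kp_cases x with ⟨j, rfl⟩ | ⟨j, rfl⟩ <;>
          rcases kp_cases y with ⟨j', rfl⟩ | ⟨j', rfl⟩
        · exact absurd hlt (show ¬(0 : Fin 2) < 0 by decide)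
        · rw [hφ0, hφ1]
          exact hord _ (hm₁ _) _ (hm₂ _)
        · exact absurd hlt (show ¬(1 : Fin 2) < 0 by decide)
        · exact absurd hlt (show ¬(1 : Fin 2) < 1 by decide)
lemma wedge_copy_iff {r n : ℕ} (G : Finset (Finset (Fin n))) :
    IsCopy (WedgePoset r) G ↔ G.card = r + 1 ∧ ∃ T ∈ G, ∀ A ∈ G, A ⊆ T := by
  constructor
  · intro h
    obtain ⟨S₁, S₂, h₁, h₂, hd, huni, hord⟩ := (kp2_copy_iff G).mp h
    obtain ⟨T, rfl⟩ := Finset.card_eq_one.mp h₂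
    refine ⟨?_, T, ?_, ?_⟩
    · rw [← huni, Finset.card_union_of_disjoint hd, h₁, Finset.card_singleton]
    · rw [← huni]; exact Finset.mem_union_right _ (Finset.mem_singleton_self T)
    · intro A hA
      rw [← huni, Finset.mem_union] at hA
      rcases hA with hA | hA
      · exact hord A hA T (Finset.mem_singleton_self T)
      · rw [Finset.mem_singleton] at hA; subst hA; exact subset_rfl
  · rintro ⟨hcard, T, hT, htop⟩
    refine (kp2_copy_iff G).mpr ⟨G.erase T, {T}, ?_, Finset.card_singleton T, ?_, ?_, ?_⟩
    · rw [Finset.card_erase_of_mem hT, hcard]; omega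
    · simp
    · rw [Finset.union_comm, ← Finset.insert_eq, Finset.insert_erase hT]
    · intro A hA B hB
      rw [Finset.mem_singleton] at hB; subst hB
      exact htop A (Finset.mem_of_mem_erase hA)

lemma vee_copy_iff {r n : ℕ} (G : Finset (Finset (Fin n))) :
    IsCopy (VeePoset r) G ↔ G.card = r + 1 ∧ ∃ B ∈ G, ∀ A ∈ G, B ⊆ A := by
  constructor
  · intro h
    obtain ⟨S₁, S₂, h₁, h₂, hd, huni, hord⟩ := (kp2_copy_iff G).mp h
    obtain ⟨B, rfl⟩ := Finset.card_eq_one.mp h₁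
    refine ⟨?_, B, ?_, ?_⟩
    · rw [← huni, Finset.card_union_of_disjoint hd, h₂, Finset.card_singleton]; omega
    · rw [← huni]; exact Finset.mem_union_left _ (Finset.mem_singleton_self B)
    · intro A hA
      rw [← huni, Finset.mem_union] at hA
      rcases hA with hA | hA
      · rw [Finset.mem_singleton] at hA; subst hA; exact subset_rfl
      · exact hord B (Finset.mem_singleton_self B) A hA
  · rintro ⟨hcard, B, hB, hbot⟩
    refine (kp2_copy_iff G).mpr ⟨{B}, G.erase B, Finset.card_singleton B, ?_, ?_, ?_, ?_⟩
    · rw [Finset.card_erase_of_mem hB, hcard]; omega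
    · simp
    · rw [← Finset.insert_eq, Finset.insert_erase hB]
    · intro A hA C hC
      rw [Finset.mem_singleton] at hA; subst hA
      exact hbot C (Finset.mem_of_mem_erase hC)

lemma level_card (n k : ℕ) : (level n k).card = n.choose k := by
  have h : level n k = Finset.powersetCard k (Finset.univ : Finset (Fin n)) := by
    ext A
    simp [level, Finset.mem_powersetCard, eq_comm]
  rw [h, Finset.card_powersetCard, Finset.card_univ, Fintype.card_fin]

lemma copyCount_eq_zero_iff {α : Type} [PartialOrder α] [Fintype α] {n : ℕ}
    {F : Finset (Finset (Fin n))} :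
    copyCount α F = 0 ↔ ∀ G ⊆ F, ¬ IsCopy α G := by
  rw [copyCount, Finset.card_eq_zero, Finset.filter_eq_empty_iff]
  constructor
  · intro h G hG; exact h (Finset.mem_powerset.mpr hG)
  · intro h G hG; exact h G (Finset.mem_powerset.mp hG)

lemma upper1 {n r : ℕ} (hr : 1 ≤ r) (F : Finset (Finset (Fin n)))
    (hF : copyCount (VeePoset 2) F = 0) :
    copyCount (WedgePoset r) F ≤ (n.choose (n / 2)).choose r := by
  classical
  rw [copyCount_eq_zero_iff] at hF
  have hno : ∀ A B C : Finset (Fin n), A ∈ F → B ∈ F → C ∈ F →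
      A ⊂ B → A ⊂ C → B = C := by
    intro A B C hA hB hC hAB hAC
    by_contra hBC
    refine hF {A, B, C} ?_ ?_
    · intro X hX
      simp only [Finset.mem_insert, Finset.mem_singleton] at hX
      rcases hX with rfl | rfl | rfl <;> assumption
    · rw [vee_copy_iff]
      refine ⟨Finset.card_eq_three.mpr ⟨A, B, C, hAB.ne, hAC.ne, hBC, rfl⟩, A, by simp, ?_⟩
      intro X hX
      simp only [Finset.mem_insert, Finset.mem_singleton] at hX
      rcases hX with rfl | rfl | rfl
      · exact subset_rfl
      · exact hAB.subset
      · exact hAC.subset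
  set 𝒜 := F.filter (fun A => ∃ B ∈ F, A ⊂ B) with h𝒜def
  have hanti : IsAntichain (· ⊆ ·) (𝒜 : Set (Finset (Fin n))) := by
    intro A hA B hB hne hsub
    simp only [h𝒜def, Finset.coe_filter, Set.mem_setOf_eq] at hA hB
    obtain ⟨hAF, C, hCF, hAC⟩ := hA
    obtain ⟨hBF, D, hDF, hBD⟩ := hB
    have h1 : A ⊂ B := hsub.ssubset_of_ne hne
    exact hBD.ne (hno A B D hAF hBF hDF h1 (h1.trans hBD))
  have hcard𝒜 : 𝒜.card ≤ n.choose (n / 2) := by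
    have := IsAntichain.sperner hanti
    simpa using this
  have key : copyCount (WedgePoset r) F ≤ (𝒜.powersetCard r).card := by
    rw [copyCount]
    apply Finset.card_le_card_of_injOn (fun G => G.filter (fun A => ∃ B ∈ G, A ⊂ B))
    · intro G hG
      rw [Finset.mem_coe, Finset.mem_filter, Finset.mem_powerset] at hG
      obtain ⟨hGF, hcopy⟩ := hG
      rw [wedge_copy_iff] at hcopy
      obtain ⟨hGcard, T, hT, htop⟩ := hcopy
      have hfG : G.filter (fun A => ∃ B ∈ G, A ⊂ B) = G.erase T := by
        ext A
        simp only [Finset.mem_filter, Finset.mem_erase]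
        constructor
        · rintro ⟨hA, B, hB, hAB⟩
          refine ⟨fun h => ?_, hA⟩
          subst h
          exact hAB.not_subset (htop B hB)
        · rintro ⟨hne, hA⟩
          exact ⟨hA, T, hT, (htop A hA).ssubset_of_ne hne⟩
      rw [Finset.mem_coe, Finset.mem_powersetCard]; dsimp only; rw [hfG]
      constructor
      · intro A hA
        rw [Finset.mem_erase] at hA
        rw [h𝒜def, Finset.mem_filter]
        exact ⟨hGF hA.2, T, hGF hT, (htop A hA.2).ssubset_of_ne hA.1⟩
      · rw [Finset.card_erase_of_mem hT, hGcard]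
        omega
    · intro G hG G' hG' heq
      rw [Finset.mem_coe, Finset.mem_filter, Finset.mem_powerset] at hG hG'
      obtain ⟨hGF, hcopy⟩ := hG
      obtain ⟨hGF', hcopy'⟩ := hG'
      rw [wedge_copy_iff] at hcopy hcopy'
      obtain ⟨hGcard, T, hT, htop⟩ := hcopy
      obtain ⟨hGcard', T', hT', htop'⟩ := hcopy'
      have hfG : G.filter (fun A => ∃ B ∈ G, A ⊂ B) = G.erase T := by
        ext A
        simp only [Finset.mem_filter, Finset.mem_erase]
        constructor
        · rintro ⟨hA, B, hB, hAB⟩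
          refine ⟨fun h => ?_, hA⟩
          subst h
          exact hAB.not_subset (htop B hB)
        · rintro ⟨hne, hA⟩
          exact ⟨hA, T, hT, (htop A hA).ssubset_of_ne hne⟩
      have hfG' : G'.filter (fun A => ∃ B ∈ G', A ⊂ B) = G'.erase T' := by
        ext A
        simp only [Finset.mem_filter, Finset.mem_erase]
        constructor
        · rintro ⟨hA, B, hB, hAB⟩
          refine ⟨fun h => ?_, hA⟩
          subst h
          exact hAB.not_subset (htop' B hB)
        · rintro ⟨hne, hA⟩
          exact ⟨hA, T', hT', (htop' A hA).ssubset_of_ne hne⟩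
      simp only [hfG, hfG'] at heq
      have hne : (G.erase T).Nonempty := by
        rw [← Finset.card_pos, Finset.card_erase_of_mem hT, hGcard]
        omega
      obtain ⟨A, hA⟩ := hne
      have hA' : A ∈ G'.erase T' := heq ▸ hA
      rw [Finset.mem_erase] at hA hA'
      have hTT' : T = T' :=
        hno A T T' (hGF hA.2) (hGF hT) (hGF' hT')
          ((htop A hA.2).ssubset_of_ne hA.1) ((htop' A hA'.2).ssubset_of_ne hA'.1)
      subst hTT'
      rw [← Finset.insert_erase hT, heq, Finset.insert_erase hT']
  calc copyCount (WedgePoset r) F ≤ (𝒜.powersetCard r).card := key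
    _ = 𝒜.card.choose r := Finset.card_powersetCard r 𝒜
    _ ≤ (n.choose (n / 2)).choose r := Nat.choose_le_choose r hcard𝒜

lemma lower1 {n r : ℕ} (hn : 1 ≤ n) :
    ∃ F : Finset (Finset (Fin n)), copyCount (VeePoset 2) F = 0 ∧
      (n.choose (n / 2)).choose r ≤ copyCount (WedgePoset r) F := by
  classical
  have hdiv : n / 2 < n := Nat.div_lt_self hn one_lt_two
  set L := level n (n / 2) with hLdef
  have hLmem : ∀ A ∈ L, A.card = n / 2 := by
    intro A hA; simpa [hLdef, level] using hA
  have hunivL : (Finset.univ : Finset (Fin n)) ∉ L := by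
    intro h
    have := hLmem _ h
    rw [Finset.card_univ, Fintype.card_fin] at this
    omega
  refine ⟨insert Finset.univ L, ?_, ?_⟩
  · rw [copyCount_eq_zero_iff]
    intro G hG hcopy
    rw [vee_copy_iff] at hcopy
    obtain ⟨hc3, B, hBG, hbot⟩ := hcopy
    have key : ∀ Z ∈ G, Z ≠ B → Z = Finset.univ := by
      intro Z hZ hne
      rcases Finset.mem_insert.mp (hG hZ) with h | h
      · exact h
      · rcases Finset.mem_insert.mp (hG hBG) with hB | hB
        · exact Finset.univ_subset_iff.mp (hB ▸ hbot Z hZ)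
        · have := Finset.eq_of_subset_of_card_le (hbot Z hZ)
            (by rw [hLmem Z h, hLmem B hB])
          exact absurd this.symm hne
    have h2 : 1 < (G.erase B).card := by
      rw [Finset.card_erase_of_mem hBG, hc3]
      omega
    obtain ⟨X, hX, Y, hY, hXY⟩ := Finset.one_lt_card.mp h2
    rw [Finset.mem_erase] at hX hY
    exact hXY ((key X hX.2 hX.1).trans (key Y hY.2 hY.1).symm)
  · rw [copyCount]
    have hinj : (L.powersetCard r).card ≤
        ((insert Finset.univ L).powerset.filter
          (fun G => IsCopy (WedgePoset r) G)).card := by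
      apply Finset.card_le_card_of_injOn (fun S => insert Finset.univ S)
      · intro S hS
        rw [Finset.mem_coe, Finset.mem_powersetCard] at hS
        obtain ⟨hSL, hScard⟩ := hS
        have hus : Finset.univ ∉ S := fun h => hunivL (hSL h)
        rw [Finset.mem_coe, Finset.mem_filter, Finset.mem_powerset]
        refine ⟨Finset.insert_subset_insert _ hSL, ?_⟩
        rw [wedge_copy_iff]
        refine ⟨by dsimp only; rw [Finset.card_insert_of_notMem hus, hScard], Finset.univ,
          Finset.mem_insert_self _ _, fun A _ => Finset.subset_univ A⟩
      · intro S hS S' hS' heq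
        rw [Finset.mem_coe, Finset.mem_powersetCard] at hS hS'
        have hus : Finset.univ ∉ S := fun h => hunivL (hS.1 h)
        have hus' : Finset.univ ∉ S' := fun h => hunivL (hS'.1 h)
        have heq' : insert Finset.univ S = insert Finset.univ S' := heq
        rw [← Finset.erase_insert hus, heq', Finset.erase_insert hus']
    calc (n.choose (n / 2)).choose r = (L.powersetCard r).card := by
          rw [Finset.card_powersetCard, hLdef, level_card]
      _ ≤ _ := hinj
lemma upper2 {n r : ℕ} (hr : 1 ≤ r) (F : Finset (Finset (Fin n)))
    (hF : copyCount (WedgePoset 2) F = 0) :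
    copyCount (VeePoset r) F ≤ (n.choose (n / 2)).choose r := by
  classical
  rw [copyCount_eq_zero_iff] at hF
  have hno : ∀ A B C : Finset (Fin n), A ∈ F → B ∈ F → C ∈ F →
      B ⊂ A → C ⊂ A → B = C := by
    intro A B C hA hB hC hBA hCA
    by_contra hBC
    refine hF {A, B, C} ?_ ?_
    · intro X hX
      simp only [Finset.mem_insert, Finset.mem_singleton] at hX
      rcases hX with rfl | rfl | rfl <;> assumption
    · rw [wedge_copy_iff]
      refine ⟨Finset.card_eq_three.mpr ⟨A, B, C, hBA.ne', hCA.ne', hBC, rfl⟩, A, by simp, ?_⟩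
      intro X hX
      simp only [Finset.mem_insert, Finset.mem_singleton] at hX
      rcases hX with rfl | rfl | rfl
      · exact subset_rfl
      · exact hBA.subset
      · exact hCA.subset
  set 𝒜 := F.filter (fun A => ∃ B ∈ F, B ⊂ A) with h𝒜def
  have hanti : IsAntichain (· ⊆ ·) (𝒜 : Set (Finset (Fin n))) := by
    intro A hA B hB hne hsub
    simp only [h𝒜def, Finset.coe_filter, Set.mem_setOf_eq] at hA hB
    obtain ⟨hAF, C, hCF, hCA⟩ := hA
    obtain ⟨hBF, D, hDF, hDB⟩ := hB
    have h1 : A ⊂ B := hsub.ssubset_of_ne hne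
    exact hCA.ne (hno B C A hBF hCF hAF (hCA.trans h1) h1)
  have hcard𝒜 : 𝒜.card ≤ n.choose (n / 2) := by
    have := IsAntichain.sperner hanti
    simpa using this
  have key : copyCount (VeePoset r) F ≤ (𝒜.powersetCard r).card := by
    rw [copyCount]
    apply Finset.card_le_card_of_injOn (fun G => G.filter (fun A => ∃ B ∈ G, B ⊂ A))
    · intro G hG
      rw [Finset.mem_coe, Finset.mem_filter, Finset.mem_powerset] at hG
      obtain ⟨hGF, hcopy⟩ := hG
      rw [vee_copy_iff] at hcopy
      obtain ⟨hGcard, B0, hB0, hbot⟩ := hcopy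
      have hfG : G.filter (fun A => ∃ B ∈ G, B ⊂ A) = G.erase B0 := by
        ext A
        simp only [Finset.mem_filter, Finset.mem_erase]
        constructor
        · rintro ⟨hA, B, hB, hBA⟩
          refine ⟨fun h => ?_, hA⟩
          subst h
          exact hBA.not_subset (hbot B hB)
        · rintro ⟨hne, hA⟩
          exact ⟨hA, B0, hB0, (hbot A hA).ssubset_of_ne (Ne.symm hne)⟩
      rw [Finset.mem_coe, Finset.mem_powersetCard]; dsimp only; rw [hfG]
      constructor
      · intro A hA
        rw [Finset.mem_erase] at hA
        rw [h𝒜def, Finset.mem_filter]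
        exact ⟨hGF hA.2, B0, hGF hB0, (hbot A hA.2).ssubset_of_ne (Ne.symm hA.1)⟩
      · rw [Finset.card_erase_of_mem hB0, hGcard]
        omega
    · intro G hG G' hG' heq
      rw [Finset.mem_coe, Finset.mem_filter, Finset.mem_powerset] at hG hG'
      obtain ⟨hGF, hcopy⟩ := hG
      obtain ⟨hGF', hcopy'⟩ := hG'
      rw [vee_copy_iff] at hcopy hcopy'
      obtain ⟨hGcard, B0, hB0, hbot⟩ := hcopy
      obtain ⟨hGcard', B0', hB0', hbot'⟩ := hcopy'
      have hfG : G.filter (fun A => ∃ B ∈ G, B ⊂ A) = G.erase B0 := by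
        ext A
        simp only [Finset.mem_filter, Finset.mem_erase]
        constructor
        · rintro ⟨hA, B, hB, hBA⟩
          refine ⟨fun h => ?_, hA⟩
          subst h
          exact hBA.not_subset (hbot B hB)
        · rintro ⟨hne, hA⟩
          exact ⟨hA, B0, hB0, (hbot A hA).ssubset_of_ne (Ne.symm hne)⟩
      have hfG' : G'.filter (fun A => ∃ B ∈ G', B ⊂ A) = G'.erase B0' := by
        ext A
        simp only [Finset.mem_filter, Finset.mem_erase]
        constructor
        · rintro ⟨hA, B, hB, hBA⟩
          refine ⟨fun h => ?_, hA⟩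
          subst h
          exact hBA.not_subset (hbot' B hB)
        · rintro ⟨hne, hA⟩
          exact ⟨hA, B0', hB0', (hbot' A hA).ssubset_of_ne (Ne.symm hne)⟩
      simp only [hfG, hfG'] at heq
      have hne : (G.erase B0).Nonempty := by
        rw [← Finset.card_pos, Finset.card_erase_of_mem hB0, hGcard]
        omega
      obtain ⟨A, hA⟩ := hne
      have hA' : A ∈ G'.erase B0' := heq ▸ hA
      rw [Finset.mem_erase] at hA hA'
      have hBB' : B0 = B0' :=
        hno A B0 B0' (hGF hA.2) (hGF hB0) (hGF' hB0')
          ((hbot A hA.2).ssubset_of_ne (Ne.symm hA.1))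
          ((hbot' A hA'.2).ssubset_of_ne (Ne.symm hA'.1))
      subst hBB'
      rw [← Finset.insert_erase hB0, heq, Finset.insert_erase hB0']
  calc copyCount (VeePoset r) F ≤ (𝒜.powersetCard r).card := key
    _ = 𝒜.card.choose r := Finset.card_powersetCard r 𝒜
    _ ≤ (n.choose (n / 2)).choose r := Nat.choose_le_choose r hcard𝒜

lemma lower2 {n r : ℕ} (hn : 1 ≤ n) :
    ∃ F : Finset (Finset (Fin n)), copyCount (WedgePoset 2) F = 0 ∧
      (n.choose (n / 2)).choose r ≤ copyCount (VeePoset r) F := by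
  classical
  have hdiv : n / 2 < n := Nat.div_lt_self hn one_lt_two
  set k := n - n / 2 with hk
  have hk0 : 0 < k := by omega
  set L := level n k with hLdef
  have hLmem : ∀ A ∈ L, A.card = k := by
    intro A hA; simpa [hLdef, level] using hA
  have hemptyL : (∅ : Finset (Fin n)) ∉ L := by
    intro h
    have := hLmem _ h
    rw [Finset.card_empty] at this
    omega
  refine ⟨insert ∅ L, ?_, ?_⟩
  · rw [copyCount_eq_zero_iff]
    intro G hG hcopy
    rw [wedge_copy_iff] at hcopy
    obtain ⟨hc3, T, hTG, htop⟩ := hcopy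
    have key : ∀ Z ∈ G, Z ≠ T → Z = ∅ := by
      intro Z hZ hne
      rcases Finset.mem_insert.mp (hG hZ) with h | h
      · exact h
      · rcases Finset.mem_insert.mp (hG hTG) with hT | hT
        · exact Finset.subset_empty.mp (hT ▸ htop Z hZ)
        · have := Finset.eq_of_subset_of_card_le (htop Z hZ)
            (by rw [hLmem Z h, hLmem T hT])
          exact absurd this hne
    have h2 : 1 < (G.erase T).card := by
      rw [Finset.card_erase_of_mem hTG, hc3]
      omega
    obtain ⟨X, hX, Y, hY, hXY⟩ := Finset.one_lt_card.mp h2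
    rw [Finset.mem_erase] at hX hY
    exact hXY ((key X hX.2 hX.1).trans (key Y hY.2 hY.1).symm)
  · rw [copyCount]
    have hinj : (L.powersetCard r).card ≤
        ((insert ∅ L).powerset.filter
          (fun G => IsCopy (VeePoset r) G)).card := by
      apply Finset.card_le_card_of_injOn (fun S => insert ∅ S)
      · intro S hS
        rw [Finset.mem_coe, Finset.mem_powersetCard] at hS
        obtain ⟨hSL, hScard⟩ := hS
        have hus : (∅ : Finset (Fin n)) ∉ S := fun h => hemptyL (hSL h)
        rw [Finset.mem_coe, Finset.mem_filter, Finset.mem_powerset]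
        refine ⟨Finset.insert_subset_insert _ hSL, ?_⟩
        rw [vee_copy_iff]
        refine ⟨by dsimp only; rw [Finset.card_insert_of_notMem hus, hScard], ∅,
          Finset.mem_insert_self _ _, fun A _ => Finset.empty_subset A⟩
      · intro S hS S' hS' heq
        rw [Finset.mem_coe, Finset.mem_powersetCard] at hS hS'
        have hus : (∅ : Finset (Fin n)) ∉ S := fun h => hemptyL (hS.1 h)
        have hus' : (∅ : Finset (Fin n)) ∉ S' := fun h => hemptyL (hS'.1 h)
        have heq' : insert ∅ S = insert ∅ S' := heq
        rw [← Finset.erase_insert hus, heq', Finset.erase_insert hus']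
    calc (n.choose (n / 2)).choose r = (L.powersetCard r).card := by
          rw [Finset.card_powersetCard, hLdef, level_card, hk,
            Nat.choose_symm (Nat.div_le_self n 2)]
      _ ≤ _ := hinj
theorem statement3 (n r : ℕ) (hn : 1 ≤ n) (hr : 1 ≤ r) :
    La n (VeePoset 2) (WedgePoset r) = (n.choose (n / 2)).choose r ∧
    La n (WedgePoset 2) (VeePoset r) = (n.choose (n / 2)).choose r := by
  constructor
  · apply le_antisymm
    · apply Finset.sup_le
      intro F hF
      rw [Finset.mem_filter] at hF
      exact upper1 hr F hF.2
    · obtain ⟨F, hfree, hge⟩ := lower1 (n := n) (r := r) hn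
      exact le_trans hge (Finset.le_sup (Finset.mem_filter.mpr ⟨Finset.mem_univ _, hfree⟩))
  · apply le_antisymm
    · apply Finset.sup_le
      intro F hF
      rw [Finset.mem_filter] at hF
      exact upper2 hr F hF.2
    · obtain ⟨F, hfree, hge⟩ := lower2 (n := n) (r := r) hn
      exact le_trans hge (Finset.le_sup (Finset.mem_filter.mpr ⟨Finset.mem_univ _, hfree⟩))

end
end

section
/- For all integers n ≥ 1 and r ≥ 1, La(n, P_3, ∧_r) = La(n, P_3, ∨_r) = max over 0 ≤ i ≤ n of C(n,i)·C(C(i,⌊i/2⌋), r). Moreover, for each fixed r, if i_r(n) denotes any value of i attaining this maximum, then i_r(n)/n → 2^r/(2^r+1) as n → ∞. -/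
open Classical Finset

noncomputable section

namespace ProofAux

variable {n : ℕ}

lemma card_KP2 (a b : ℕ) : Fintype.card (KP ![a, b]) = a + b := by
  show Fintype.card (Σ i : Fin 2, Fin (![a, b] i)) = a + b
  simp

lemma vec2_at {a b : ℕ} (i : Fin 2) : (![a, b]) i = if i.1 = 0 then a else b := by
  fin_cases i <;> simp

lemma compl_subset_compl' {A B : Finset (Fin n)} (h : A ⊆ B) : Bᶜ ⊆ Aᶜ := by
  intro x hx
  simp only [Finset.mem_compl] at *
  exact fun hxA => hx (h hxA)

lemma compl_inj' : Function.Injective (fun A : Finset (Fin n) => Aᶜ) :=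
  Function.Involutive.injective (fun A => compl_compl A)

lemma KP2_ext {a b : ℕ} {x y : KP ![a, b]} (h1 : x.1.1 = y.1.1) (h2 : x.2.1 = y.2.1) :
    x = y := by
  refine Sigma.ext (Fin.ext h1) ?_
  rw [Fin.heq_ext_iff (congrArg _ (Fin.ext h1))]
  exact h2

/-- characterization of wedge copies -/
lemma isCopy_wedge_iff (r : ℕ) (G : Finset (Finset (Fin n))) :
    IsCopy (WedgePoset r) G ↔ G.card = r + 1 ∧ ∃ B ∈ G, ∀ A ∈ G, A ⊆ B := by
  constructor
  · rintro ⟨φ, hinj, himg, hmono⟩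
    have hcard : G.card = r + 1 := by
      rw [← himg, Finset.card_image_of_injective _ hinj, Finset.card_univ, card_KP2]
    set top : WedgePoset r := ⟨1, Fin.cast (by simp) (0 : Fin 1)⟩ with htop
    refine ⟨hcard, φ top, ?_, ?_⟩
    · rw [← himg]; exact Finset.mem_image_of_mem _ (Finset.mem_univ _)
    · intro A hA
      rw [← himg] at hA
      obtain ⟨x, -, rfl⟩ := Finset.mem_image.mp hA
      have hx2 := x.1.isLt
      have hx0 : x.1.1 = 0 ∨ x.1.1 = 1 := by omega
      rcases hx0 with h0 | h1
      · exact hmono _ _ (Or.inr (by simp [htop, Fin.lt_def, h0]))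
      · have hlt := x.2.isLt
        have hv : (![r, 1]) x.1 = 1 := by rw [vec2_at, if_neg (by omega)]
        have hxtop : x = top := KP2_ext (by simp [htop, h1]) (by rw [htop]; simp; omega)
        rw [hxtop]
  · rintro ⟨hcard, B, hB, hsub⟩
    set S := G.erase B with hSdef
    have hS : S.card = r := by
      rw [hSdef, Finset.card_erase_of_mem hB, hcard]; rfl
    set e : Fin r → Finset (Fin n) :=
      fun k => ((S.equivFin.symm (Fin.cast hS.symm k)) : Finset (Fin n)) with he
    have heS : ∀ k, e k ∈ S := fun k => (S.equivFin.symm (Fin.cast hS.symm k)).2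
    have heinj : Function.Injective e := by
      intro a b hab
      have h1 := S.equivFin.symm.injective (Subtype.ext hab)
      simpa [Fin.ext_iff] using congrArg Fin.val h1
    have heA : ∀ (A : Finset (Fin n)) (hAS : A ∈ S),
        e (Fin.cast hS (S.equivFin ⟨A, hAS⟩)) = A := by
      intro A hAS
      have hkk : Fin.cast hS.symm (Fin.cast hS (S.equivFin ⟨A, hAS⟩)) = S.equivFin ⟨A, hAS⟩ :=
        Fin.ext (by simp)
      calc e (Fin.cast hS (S.equivFin ⟨A, hAS⟩))
          = ((S.equivFin.symm (Fin.cast hS.symm (Fin.cast hS (S.equivFin ⟨A, hAS⟩)))) :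
              Finset (Fin n)) := rfl
        _ = A := by rw [hkk, Equiv.symm_apply_apply]
    refine ⟨fun x => if h : x.1.1 = 0 then
        e ⟨x.2.1, by
          have h2 := x.2.isLt
          have hv : (![r, 1]) x.1 = r := by rw [vec2_at, if_pos h]
          omega⟩ else B, ?_, ?_, ?_⟩
    · intro x y hxy
      by_cases hx : x.1.1 = 0 <;> by_cases hy : y.1.1 = 0 <;>
        simp only [hx, hy, dif_pos, dif_neg, not_false_iff] at hxy
      · have h1 := heinj hxy
        exact KP2_ext (by omega) (by simpa [Fin.ext_iff] using congrArg Fin.val h1)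
      · exfalso; apply Finset.notMem_erase B G; rw [← hSdef, ← hxy]; exact heS _
      · exfalso; apply Finset.notMem_erase B G; rw [← hSdef, hxy]; exact heS _
      · have h2 := x.2.isLt
        have h3 := y.2.isLt
        have hv2 : (![r, 1]) x.1 = 1 := by rw [vec2_at, if_neg hx]
        have hv3 : (![r, 1]) y.1 = 1 := by rw [vec2_at, if_neg hy]
        have hx1 := x.1.isLt
        have hy1 := y.1.isLt
        exact KP2_ext (by omega) (by omega)
    · ext A
      simp only [Finset.mem_image, Finset.mem_univ, true_and]
      constructor
      · rintro ⟨x, rfl⟩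
        by_cases hx : x.1.1 = 0
        · simp only [hx, dif_pos]
          exact Finset.mem_of_mem_erase (heS _)
        · simp only [hx, dif_neg, not_false_iff]
          exact hB
      · intro hA
        by_cases hAB : A = B
        · refine ⟨⟨1, Fin.cast (by simp) (0 : Fin 1)⟩, ?_⟩
          dsimp only
          rw [dif_neg (by simp)]
          exact hAB.symm
        · have hAS : A ∈ S := Finset.mem_erase.mpr ⟨hAB, hA⟩
          set k : Fin r := Fin.cast hS (S.equivFin ⟨A, hAS⟩) with hk
          refine ⟨⟨0, Fin.cast (by simp) k⟩, ?_⟩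
          dsimp only
          rw [dif_pos (by simp)]
          rw [← heA A hAS, ← hk]
          congr 1
    · intro x y hxy
      rcases hxy with rfl | hlt
      · exact subset_rfl
      · have hlt' := Fin.lt_def.mp hlt
        have hy2 := y.1.isLt
        have hx : x.1.1 = 0 := by omega
        have hy : ¬ y.1.1 = 0 := by omega
        dsimp only
        rw [dif_pos hx, dif_neg hy]
        exact hsub _ (Finset.mem_of_mem_erase (heS _))

end ProofAux

namespace ProofAux

variable {n : ℕ}

/-- characterization of vee copies -/
lemma isCopy_vee_iff (r : ℕ) (G : Finset (Finset (Fin n))) :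
    IsCopy (VeePoset r) G ↔ G.card = r + 1 ∧ ∃ B ∈ G, ∀ A ∈ G, B ⊆ A := by
  constructor
  · rintro ⟨φ, hinj, himg, hmono⟩
    have hcard : G.card = r + 1 := by
      rw [← himg, Finset.card_image_of_injective _ hinj, Finset.card_univ, card_KP2]
      omega
    set bot : VeePoset r := ⟨0, Fin.cast (by simp) (0 : Fin 1)⟩ with hbot
    refine ⟨hcard, φ bot, ?_, ?_⟩
    · rw [← himg]; exact Finset.mem_image_of_mem _ (Finset.mem_univ _)
    · intro A hA
      rw [← himg] at hA
      obtain ⟨x, -, rfl⟩ := Finset.mem_image.mp hA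
      have hx2 := x.1.isLt
      by_cases h0 : x.1.1 = 0
      · have hlt := x.2.isLt
        have hv : (![1, r]) x.1 = 1 := by rw [vec2_at, if_pos h0]
        have hxbot : x = bot := KP2_ext (by simp [hbot, h0]) (by rw [hbot]; simp; omega)
        rw [hxbot]
      · exact hmono _ _ (Or.inr (by rw [hbot, Fin.lt_def]; simp; omega))
  · rintro ⟨hcard, B, hB, hsub⟩
    set S := G.erase B with hSdef
    have hS : S.card = r := by
      rw [hSdef, Finset.card_erase_of_mem hB, hcard]; rfl
    set e : Fin r → Finset (Fin n) :=
      fun k => ((S.equivFin.symm (Fin.cast hS.symm k)) : Finset (Fin n)) with he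
    have heS : ∀ k, e k ∈ S := fun k => (S.equivFin.symm (Fin.cast hS.symm k)).2
    have heinj : Function.Injective e := by
      intro a b hab
      have h1 := S.equivFin.symm.injective (Subtype.ext hab)
      simpa [Fin.ext_iff] using congrArg Fin.val h1
    have heA : ∀ (A : Finset (Fin n)) (hAS : A ∈ S),
        e (Fin.cast hS (S.equivFin ⟨A, hAS⟩)) = A := by
      intro A hAS
      have hkk : Fin.cast hS.symm (Fin.cast hS (S.equivFin ⟨A, hAS⟩)) = S.equivFin ⟨A, hAS⟩ :=
        Fin.ext (by simp)
      calc e (Fin.cast hS (S.equivFin ⟨A, hAS⟩))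
          = ((S.equivFin.symm (Fin.cast hS.symm (Fin.cast hS (S.equivFin ⟨A, hAS⟩)))) :
              Finset (Fin n)) := rfl
        _ = A := by rw [hkk, Equiv.symm_apply_apply]
    refine ⟨fun x => if h : x.1.1 = 0 then B else
        e ⟨x.2.1, by
          have h2 := x.2.isLt
          have hv : (![1, r]) x.1 = r := by rw [vec2_at, if_neg h]
          omega⟩, ?_, ?_, ?_⟩
    · intro x y hxy
      by_cases hx : x.1.1 = 0 <;> by_cases hy : y.1.1 = 0 <;>
        simp only [hx, hy, dif_pos, dif_neg, not_false_iff] at hxy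
      · have h2 := x.2.isLt
        have h3 := y.2.isLt
        have hv2 : (![1, r]) x.1 = 1 := by rw [vec2_at, if_pos hx]
        have hv3 : (![1, r]) y.1 = 1 := by rw [vec2_at, if_pos hy]
        exact KP2_ext (by omega) (by omega)
      · exfalso; apply Finset.notMem_erase B G; rw [← hSdef, hxy]; exact heS _
      · exfalso; apply Finset.notMem_erase B G; rw [← hSdef, ← hxy]; exact heS _
      · have h1 := heinj hxy
        exact KP2_ext (by omega) (by simpa [Fin.ext_iff] using congrArg Fin.val h1)
    · ext A
      simp only [Finset.mem_image, Finset.mem_univ, true_and]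
      constructor
      · rintro ⟨x, rfl⟩
        by_cases hx : x.1.1 = 0
        · simp only [hx, dif_pos]
          exact hB
        · simp only [hx, dif_neg, not_false_iff]
          exact Finset.mem_of_mem_erase (heS _)
      · intro hA
        by_cases hAB : A = B
        · refine ⟨⟨0, Fin.cast (by simp) (0 : Fin 1)⟩, ?_⟩
          dsimp only
          rw [dif_pos (by simp)]
          exact hAB.symm
        · have hAS : A ∈ S := Finset.mem_erase.mpr ⟨hAB, hA⟩
          set k : Fin r := Fin.cast hS (S.equivFin ⟨A, hAS⟩) with hk
          refine ⟨⟨1, Fin.cast (by simp) k⟩, ?_⟩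
          dsimp only
          rw [dif_neg (by simp)]
          rw [← heA A hAS, ← hk]
          congr 1
    · intro x y hxy
      rcases hxy with rfl | hlt
      · exact subset_rfl
      · have hlt' := Fin.lt_def.mp hlt
        have hy2 := y.1.isLt
        have hx : x.1.1 = 0 := by omega
        have hy : ¬ y.1.1 = 0 := by omega
        dsimp only
        rw [dif_pos hx, dif_neg hy]
        exact hsub _ (Finset.mem_of_mem_erase (heS _))

end ProofAux

namespace ProofAux

variable {n : ℕ}

lemma isCopy_chain3_elim {G : Finset (Finset (Fin n))} (h : IsCopy (PChain 3) G) :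
    ∃ A B C : Finset (Fin n), A ∈ G ∧ B ∈ G ∧ C ∈ G ∧
      A ≠ B ∧ B ≠ C ∧ A ⊆ B ∧ B ⊆ C := by
  obtain ⟨φ, hinj, himg, hmono⟩ := h
  refine ⟨φ 0, φ 1, φ 2, ?_, ?_, ?_, ?_, ?_, ?_, ?_⟩
  · rw [← himg]; exact Finset.mem_image_of_mem _ (Finset.mem_univ _)
  · rw [← himg]; exact Finset.mem_image_of_mem _ (Finset.mem_univ _)
  · rw [← himg]; exact Finset.mem_image_of_mem _ (Finset.mem_univ _)
  · exact fun h => absurd (hinj h) (by decide)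
  · exact fun h => absurd (hinj h) (by decide)
  · exact hmono _ _ (by decide)
  · exact hmono _ _ (by decide)

lemma isCopy_chain3_intro {A B C : Finset (Fin n)} (hAB : A ⊆ B) (hBC : B ⊆ C)
    (hAB' : A ≠ B) (hBC' : B ≠ C) : IsCopy (PChain 3) ({A, B, C} : Finset (Finset (Fin n))) := by
  have hAC' : A ≠ C := by
    rintro rfl
    exact hAB' (subset_antisymm hAB hBC)
  refine ⟨![A, B, C], ?_, ?_, ?_⟩
  · intro x y hxy
    fin_cases x <;> fin_cases y <;> simp_all [Matrix.cons_val_zero, Matrix.cons_val_one] <;>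
      first
        | rfl
        | exact absurd hxy hAB'
        | exact absurd hxy hBC'
        | exact absurd hxy hAC'
        | exact absurd hxy.symm hAB'
        | exact absurd hxy.symm hBC'
        | exact absurd hxy.symm hAC'
  · rw [show (Finset.univ : Finset (Fin 3)) = {0, 1, 2} from by decide]
    simp [Finset.image_insert]
  · intro x y hxy
    fin_cases x <;> fin_cases y <;> simp_all <;>
      first
        | exact hAB
        | exact hBC
        | exact hAB.trans hBC
        | exact absurd hxy (by decide)

lemma free_no_chain {F : Finset (Finset (Fin n))} (hF : copyCount (PChain 3) F = 0)
    {A B C : Finset (Fin n)} (hA : A ∈ F) (hB : B ∈ F) (hC : C ∈ F)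
    (hAB : A ⊆ B) (hBC : B ⊆ C) (hAB' : A ≠ B) (hBC' : B ≠ C) : False := by
  rw [copyCount, Finset.card_eq_zero, Finset.filter_eq_empty_iff] at hF
  have hmem : ({A, B, C} : Finset (Finset (Fin n))) ∈ F.powerset := by
    rw [Finset.mem_powerset]
    intro X hX
    simp only [Finset.mem_insert, Finset.mem_singleton] at hX
    rcases hX with rfl | rfl | rfl <;> assumption
  exact hF hmem (isCopy_chain3_intro hAB hBC hAB' hBC')

lemma isCopy_chain3_compl {G : Finset (Finset (Fin n))} (h : IsCopy (PChain 3) G) :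
    IsCopy (PChain 3) (G.image fun A => Aᶜ) := by
  obtain ⟨φ, hinj, himg, hmono⟩ := h
  refine ⟨fun i => (φ i.rev)ᶜ, ?_, ?_, ?_⟩
  · intro x y hxy
    have := hinj (compl_inj' hxy)
    exact Fin.rev_injective this
  · rw [← himg]
    ext X
    simp only [Finset.mem_image, Finset.mem_univ, true_and]
    constructor
    · rintro ⟨i, rfl⟩; exact ⟨φ i.rev, ⟨i.rev, rfl⟩, rfl⟩
    · rintro ⟨Y, ⟨i, rfl⟩, rfl⟩; exact ⟨i.rev, by rw [Fin.rev_rev]⟩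
  · intro x y hxy
    exact compl_subset_compl' (hmono _ _ ((Fin.rev_le_rev).mpr hxy))

lemma mem_image_compl {F : Finset (Finset (Fin n))} {A : Finset (Fin n)} :
    A ∈ F.image (fun X => Xᶜ) ↔ Aᶜ ∈ F := by
  rw [Finset.mem_image]
  constructor
  · rintro ⟨X, hX, rfl⟩
    rwa [compl_compl]
  · intro h
    exact ⟨Aᶜ, h, compl_compl A⟩

lemma image_compl_compl (F : Finset (Finset (Fin n))) :
    (F.image fun A => Aᶜ).image (fun A => Aᶜ) = F := by
  rw [Finset.image_image]
  simp [Function.comp_def]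

lemma free_compl {F : Finset (Finset (Fin n))} (hF : copyCount (PChain 3) F = 0) :
    copyCount (PChain 3) (F.image fun A => Aᶜ) = 0 := by
  rw [copyCount, Finset.card_eq_zero, Finset.filter_eq_empty_iff]
  rw [copyCount, Finset.card_eq_zero, Finset.filter_eq_empty_iff] at hF
  intro G hG hcopy
  rw [Finset.mem_powerset] at hG
  have hmem : (G.image fun A => Aᶜ) ∈ F.powerset := by
    rw [Finset.mem_powerset]
    intro X hX
    rw [mem_image_compl] at hX
    have := hG hX
    rwa [mem_image_compl, compl_compl] at this
  exact hF hmem (isCopy_chain3_compl hcopy)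

end ProofAux

namespace ProofAux

variable {n : ℕ}

lemma isCopy_vee_compl_iff (r : ℕ) (G : Finset (Finset (Fin n))) :
    IsCopy (VeePoset r) G ↔ IsCopy (WedgePoset r) (G.image fun A => Aᶜ) := by
  rw [isCopy_vee_iff, isCopy_wedge_iff]
  constructor
  · rintro ⟨hcard, B, hB, hsub⟩
    refine ⟨by rw [Finset.card_image_of_injective _ compl_inj']; exact hcard,
      Bᶜ, Finset.mem_image_of_mem _ hB, ?_⟩
    intro A' hA'
    rw [Finset.mem_image] at hA'
    obtain ⟨X, hX, rfl⟩ := hA'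
    exact compl_subset_compl' (hsub X hX)
  · rintro ⟨hcard, B', hB', hsub⟩
    rw [mem_image_compl] at hB'
    refine ⟨by rwa [Finset.card_image_of_injective _ compl_inj'] at hcard, B'ᶜ, hB', ?_⟩
    intro A hA
    have h1 : Aᶜ ⊆ B' := hsub Aᶜ (Finset.mem_image_of_mem _ hA)
    have := compl_subset_compl' h1
    rwa [compl_compl] at this

lemma copyCount_vee_eq_compl (r : ℕ) (F : Finset (Finset (Fin n))) :
    copyCount (VeePoset r) F = copyCount (WedgePoset r) (F.image fun A => Aᶜ) := by
  rw [copyCount, copyCount]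
  refine Finset.card_bij' (fun G _ => G.image fun A => Aᶜ) (fun G _ => G.image fun A => Aᶜ)
    ?_ ?_ ?_ ?_
  · intro G hG
    rw [Finset.mem_filter, Finset.mem_powerset] at hG ⊢
    exact ⟨Finset.image_subset_image hG.1, (isCopy_vee_compl_iff r G).mp hG.2⟩
  · intro G hG
    rw [Finset.mem_filter, Finset.mem_powerset] at hG ⊢
    constructor
    · intro X hX
      rw [mem_image_compl] at hX
      have := hG.1 hX
      rwa [mem_image_compl, compl_compl] at this
    · rw [isCopy_vee_compl_iff, image_compl_compl]
      exact hG.2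
  · intro G _; exact image_compl_compl G
  · intro G _; exact image_compl_compl G

lemma sup_mem_of_wedge {G : Finset (Finset (Fin n))}
    (h : ∃ B ∈ G, ∀ A ∈ G, A ⊆ B) : G.sup id ∈ G ∧ ∀ A ∈ G, A ⊆ G.sup id := by
  obtain ⟨B, hB, hsub⟩ := h
  have hsup : G.sup id = B :=
    le_antisymm (Finset.sup_le fun A hA => hsub A hA) (Finset.le_sup (f := id) hB)
  rw [hsup]
  exact ⟨hB, hsub⟩

lemma copyCount_wedge_le_sum (r : ℕ) (F : Finset (Finset (Fin n))) :
    copyCount (WedgePoset r) F ≤ ∑ B ∈ F, ((F.filter (· ⊂ B)).card.choose r) := by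
  rw [copyCount]
  have hcs : (F.sigma fun B => (F.filter (· ⊂ B)).powersetCard r).card
      = ∑ B ∈ F, ((F.filter (· ⊂ B)).card.choose r) := by
    rw [Finset.card_sigma]
    exact Finset.sum_congr rfl fun B _ => by rw [Finset.card_powersetCard]
  rw [← hcs]
  apply Finset.card_le_card_of_injOn
    (fun G => (⟨G.sup id, G.erase (G.sup id)⟩ : (_ : Finset (Fin n)) × Finset (Finset (Fin n))))
  · intro G hG
    rw [Finset.mem_coe, Finset.mem_filter, Finset.mem_powerset] at hG
    obtain ⟨hGF, hcopy⟩ := hG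
    rw [isCopy_wedge_iff] at hcopy
    obtain ⟨hcard, hwit⟩ := hcopy
    obtain ⟨hBmem, hsub⟩ := sup_mem_of_wedge hwit
    rw [Finset.mem_coe, Finset.mem_sigma]
    refine ⟨hGF hBmem, ?_⟩
    rw [Finset.mem_powersetCard]
    constructor
    · intro A hA
      obtain ⟨hAB, hAG⟩ := Finset.mem_erase.mp hA
      exact Finset.mem_filter.mpr ⟨hGF hAG,
        Finset.ssubset_iff_subset_ne.mpr ⟨hsub A hAG, hAB⟩⟩
    · rw [Finset.card_erase_of_mem hBmem, hcard]; rfl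
  · intro G1 h1 G2 h2 hpq
    rw [Finset.mem_coe, Finset.mem_filter, Finset.mem_powerset] at h1 h2
    dsimp only at hpq
    have k1 := (sup_mem_of_wedge ((isCopy_wedge_iff r G1).mp h1.2).2).1
    have k2 := (sup_mem_of_wedge ((isCopy_wedge_iff r G2).mp h2.2).2).1
    have e1 : G1.sup id = G2.sup id := congrArg Sigma.fst hpq
    have e2 : G1.erase (G1.sup id) = G2.erase (G2.sup id) := congrArg Sigma.snd hpq
    calc G1 = insert (G1.sup id) (G1.erase (G1.sup id)) := (Finset.insert_erase k1).symm
      _ = insert (G2.sup id) (G2.erase (G2.sup id)) := by rw [e2, e1]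
      _ = G2 := Finset.insert_erase k2

end ProofAux

namespace ProofAux

variable {n : ℕ}

lemma construction_free (i j : ℕ) (hji : j < i) :
    copyCount (PChain 3)
      (((Finset.univ : Finset (Fin n)).powersetCard i) ∪
        ((Finset.univ : Finset (Fin n)).powersetCard j)) = 0 := by
  rw [copyCount, Finset.card_eq_zero, Finset.filter_eq_empty_iff]
  intro G hG hcopy
  rw [Finset.mem_powerset] at hG
  obtain ⟨A, B, C, hA, hB, hC, hAB', hBC', hAB, hBC⟩ := isCopy_chain3_elim hcopy
  have cardmem : ∀ X ∈ G, X.card = i ∨ X.card = j := by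
    intro X hX
    rcases Finset.mem_union.mp (hG hX) with h | h
    · exact Or.inl (Finset.mem_powersetCard_univ.mp h)
    · exact Or.inr (Finset.mem_powersetCard_univ.mp h)
  have c1 : A.card < B.card := Finset.card_lt_card (Finset.ssubset_iff_subset_ne.mpr ⟨hAB, hAB'⟩)
  have c2 : B.card < C.card := Finset.card_lt_card (Finset.ssubset_iff_subset_ne.mpr ⟨hBC, hBC'⟩)
  rcases cardmem A hA with h | h <;> rcases cardmem B hB with h' | h' <;>
    rcases cardmem C hC with h'' | h'' <;> omega

lemma construction_count (r i j : ℕ) (hji : j < i) :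
    n.choose i * ((i.choose j).choose r) ≤
      copyCount (WedgePoset r)
        (((Finset.univ : Finset (Fin n)).powersetCard i) ∪
          ((Finset.univ : Finset (Fin n)).powersetCard j)) := by
  classical
  set F := ((Finset.univ : Finset (Fin n)).powersetCard i) ∪
      ((Finset.univ : Finset (Fin n)).powersetCard j) with hF
  set Sg := ((Finset.univ : Finset (Fin n)).powersetCard i).sigma
      (fun B => (B.powersetCard j).powersetCard r) with hSg
  have hconst : ∀ B ∈ ((Finset.univ : Finset (Fin n)).powersetCard i),
      ((B.powersetCard j).powersetCard r).card = (i.choose j).choose r := by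
    intro B hB
    rw [Finset.card_powersetCard, Finset.card_powersetCard,
      (Finset.mem_powersetCard_univ.mp hB : B.card = i)]
  have hcard : Sg.card = n.choose i * ((i.choose j).choose r) := by
    rw [hSg, Finset.card_sigma, Finset.sum_congr rfl hconst, Finset.sum_const, smul_eq_mul,
      Finset.card_powersetCard, Finset.card_univ, Fintype.card_fin]
  rw [copyCount, ← hcard]
  apply Finset.card_le_card_of_injOn (fun p => insert p.1 p.2)
  · intro p hp
    rw [Finset.mem_coe, hSg, Finset.mem_sigma] at hp
    obtain ⟨hp1, hp2⟩ := hp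
    rw [Finset.mem_powersetCard] at hp2
    obtain ⟨hp2sub, hp2card⟩ := hp2
    have hBcard : p.1.card = i := Finset.mem_powersetCard_univ.mp hp1
    have hmemS : ∀ A ∈ p.2, A ⊆ p.1 ∧ A.card = j := by
      intro A hA
      have := hp2sub hA
      rw [Finset.mem_powersetCard] at this
      exact this
    have hBnotmem : p.1 ∉ p.2 := by
      intro h
      have := (hmemS _ h).2
      omega
    rw [Finset.mem_coe, Finset.mem_filter, Finset.mem_powerset]
    refine ⟨?_, ?_⟩
    · intro X hX
      rcases Finset.mem_insert.mp hX with rfl | hXS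
      · exact Finset.mem_union_left _ hp1
      · exact Finset.mem_union_right _
          (Finset.mem_powersetCard_univ.mpr (hmemS _ hXS).2)
    · rw [isCopy_wedge_iff]
      refine ⟨by rw [Finset.card_insert_of_notMem hBnotmem, hp2card], p.1,
        Finset.mem_insert_self _ _, ?_⟩
      intro A hA
      rcases Finset.mem_insert.mp hA with rfl | hXS
      · exact subset_rfl
      · exact (hmemS _ hXS).1
  · intro p1 h1 p2 h2 hpq
    rw [Finset.mem_coe, hSg] at h1 h2
    rw [Finset.mem_sigma] at h1 h2
    dsimp only at hpq
    have key : ∀ p : (_ : Finset (Fin n)) × Finset (Finset (Fin n)),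
        p.1 ∈ ((Finset.univ : Finset (Fin n)).powersetCard i) →
        p.2 ∈ (p.1.powersetCard j).powersetCard r →
        (insert p.1 p.2).sup id = p.1 ∧ p.1 ∉ p.2 := by
      intro p hp1 hp2
      rw [Finset.mem_powersetCard] at hp2
      have hBcard : p.1.card = i := Finset.mem_powersetCard_univ.mp hp1
      have hmemS : ∀ A ∈ p.2, A ⊆ p.1 ∧ A.card = j := by
        intro A hA
        have := hp2.1 hA
        rw [Finset.mem_powersetCard] at this
        exact this
      constructor
      · refine le_antisymm (Finset.sup_le ?_) (Finset.le_sup (f := id) (Finset.mem_insert_self _ _))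
        intro A hA
        rcases Finset.mem_insert.mp hA with rfl | hXS
        · exact subset_rfl
        · exact (hmemS _ hXS).1
      · intro h
        have := (hmemS _ h).2
        omega
    obtain ⟨k1, k1'⟩ := key p1 h1.1 h1.2
    obtain ⟨k2, k2'⟩ := key p2 h2.1 h2.2
    have e1 : p1.1 = p2.1 := by rw [← k1, ← k2, hpq]
    have e2 : p1.2 = p2.2 := by
      have : (insert p1.1 p1.2).erase p1.1 = (insert p2.1 p2.2).erase p2.1 := by
        rw [hpq, e1]
      rwa [Finset.erase_insert k1', Finset.erase_insert k2'] at this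
    exact Sigma.ext e1 (heq_of_eq e2)

end ProofAux

namespace ProofAux

variable {n : ℕ}

lemma card_antichain_le {s : Finset (Fin n)} {A : Finset (Finset (Fin n))}
    (hac : ∀ X ∈ A, ∀ Y ∈ A, X ≠ Y → ¬ X ⊆ Y) (hsub : ∀ X ∈ A, X ⊆ s) :
    A.card ≤ s.card.choose (s.card / 2) := by
  classical
  set f : Finset (Fin n) → Finset {x : Fin n // x ∈ s} := fun X => X.subtype (· ∈ s) with hf
  have hmap : ∀ X ∈ A, (f X).map (Function.Embedding.subtype _) = X := by
    intro X hX
    rw [hf]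
    dsimp only
    rw [Finset.subtype_map]
    exact Finset.filter_true_of_mem (fun x hx => hsub X hX hx)
  have hinj : Set.InjOn f A := by
    intro X hX Y hY hXY
    rw [← hmap X hX, ← hmap Y hY, hXY]
  have hcard : (A.image f).card = A.card := Finset.card_image_of_injOn hinj
  have hanti : IsAntichain (· ⊆ ·) ((A.image f) : Set (Finset {x : Fin n // x ∈ s})) := by
    intro X hX Y hY hne hsubXY
    rw [Finset.mem_coe, Finset.mem_image] at hX hY
    obtain ⟨X0, hX0, rfl⟩ := hX
    obtain ⟨Y0, hY0, rfl⟩ := hY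
    have hne0 : X0 ≠ Y0 := fun h => hne (by rw [h])
    apply hac X0 hX0 Y0 hY0 hne0
    intro x hx
    have hxs : x ∈ s := hsub X0 hX0 hx
    have h1 : (⟨x, hxs⟩ : {x : Fin n // x ∈ s}) ∈ f X0 := by
      rw [hf]; dsimp only; rw [Finset.mem_subtype]; exact hx
    have h2 := hsubXY h1
    rw [hf] at h2; dsimp only at h2; rw [Finset.mem_subtype] at h2
    exact h2
  have hsp := IsAntichain.sperner hanti
  rw [hcard, Fintype.card_coe] at hsp
  exact hsp

lemma weighted_lym {T : Finset (Finset (Fin n))}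
    (hT : IsAntichain (· ⊆ ·) (T : Set (Finset (Fin n)))) (w : ℕ → ℕ) (M : ℕ)
    (hw : ∀ i, i ≤ n → w i * n.choose i ≤ M) :
    ∑ B ∈ T, w B.card ≤ M := by
  classical
  have lym := Finset.sum_card_slice_div_choose_le_one (𝕜 := ℚ) hT
  rw [Fintype.card_fin] at lym
  have key : ((∑ B ∈ T, w B.card : ℕ) : ℚ) ≤ (M : ℚ) := by
    push_cast
    have fib : ∑ B ∈ T, (w B.card : ℚ) =
        ∑ i ∈ Finset.range (n + 1), ∑ B ∈ T # i, (w B.card : ℚ) := by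
      refine (Finset.sum_fiberwise_of_maps_to ?_ _).symm
      intro B _
      rw [Finset.mem_range]
      have hBn : B.card ≤ n := by
        have := Finset.card_le_card (Finset.subset_univ B)
        simpa using this
      omega
    rw [fib]
    have step : ∀ i ∈ Finset.range (n + 1),
        ∑ B ∈ T # i, (w B.card : ℚ) ≤ (M : ℚ) * ((T # i).card / (n.choose i : ℚ)) := by
      intro i hi
      rw [Finset.mem_range] at hi
      have hpos : (0 : ℚ) < (n.choose i : ℚ) := by
        exact_mod_cast Nat.choose_pos (by omega)
      have hconst : ∑ B ∈ T # i, (w B.card : ℚ) = ((T # i).card : ℚ) * (w i : ℚ) := by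
        rw [Finset.sum_congr rfl (fun B hB => by
          rw [(Finset.mem_slice.mp hB).2]), Finset.sum_const, nsmul_eq_mul]
      rw [hconst]
      have h1 : (w i : ℚ) * (n.choose i : ℚ) ≤ (M : ℚ) := by
        exact_mod_cast hw i (by omega)
      have h2 : (w i : ℚ) ≤ (M : ℚ) / (n.choose i : ℚ) := (le_div_iff₀ hpos).mpr h1
      calc ((T # i).card : ℚ) * (w i : ℚ)
          ≤ ((T # i).card : ℚ) * ((M : ℚ) / (n.choose i : ℚ)) :=
            mul_le_mul_of_nonneg_left h2 (by positivity)
        _ = (M : ℚ) * ((T # i).card / (n.choose i : ℚ)) := by ring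
    calc ∑ i ∈ Finset.range (n + 1), ∑ B ∈ T # i, (w B.card : ℚ)
        ≤ ∑ i ∈ Finset.range (n + 1), (M : ℚ) * ((T # i).card / (n.choose i : ℚ)) :=
          Finset.sum_le_sum step
      _ = (M : ℚ) * ∑ i ∈ Finset.range (n + 1), ((T # i).card / (n.choose i : ℚ)) := by
          rw [Finset.mul_sum]
      _ ≤ (M : ℚ) * 1 := mul_le_mul_of_nonneg_left lym (by positivity)
      _ = (M : ℚ) := mul_one _
  exact_mod_cast key

lemma wedge_upper (r : ℕ) (hr : 1 ≤ r) (F : Finset (Finset (Fin n)))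
    (hF : copyCount (PChain 3) F = 0) :
    copyCount (WedgePoset r) F ≤
      (Finset.range (n + 1)).sup (fun i => n.choose i * (i.choose (i / 2)).choose r) := by
  classical
  refine (copyCount_wedge_le_sum r F).trans ?_
  set T := F.filter (fun B => ∃ A ∈ F, A ⊂ B) with hT
  have hTF : T ⊆ F := Finset.filter_subset _ _
  have hzero : ∀ B ∈ F, B ∉ T → ((F.filter (· ⊂ B)).card.choose r) = 0 := by
    intro B hB hBT
    have hemp : F.filter (· ⊂ B) = ∅ := by
      rw [Finset.filter_eq_empty_iff]
      intro A hA hAB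
      exact hBT (Finset.mem_filter.mpr ⟨hB, ⟨A, hA, hAB⟩⟩)
    rw [hemp, Finset.card_empty]
    exact Nat.choose_eq_zero_of_lt (by omega)
  rw [← Finset.sum_subset hTF hzero]
  have hanti : IsAntichain (· ⊆ ·) (T : Set (Finset (Fin n))) := by
    intro X hX Y hY hne hXY
    rw [Finset.mem_coe, hT, Finset.mem_filter] at hX hY
    obtain ⟨hXF, A, hAF, hAX⟩ := hX
    obtain ⟨hAX', hAXne⟩ := Finset.ssubset_iff_subset_ne.mp hAX
    exact free_no_chain hF hAF hXF hY.1 hAX' hXY hAXne hne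
  have hpoint : ∀ B ∈ T, (F.filter (· ⊂ B)).card.choose r
      ≤ (B.card.choose (B.card / 2)).choose r := by
    intro B hB
    apply Nat.choose_le_choose
    apply card_antichain_le
    · intro X hX Y hY hne hXY
      rw [Finset.mem_filter] at hX hY
      obtain ⟨hYsub, hYne⟩ := Finset.ssubset_iff_subset_ne.mp hY.2
      exact free_no_chain hF hX.1 hY.1 (hTF hB) hXY hYsub hne hYne
    · intro X hX
      exact (Finset.ssubset_iff_subset_ne.mp (Finset.mem_filter.mp hX).2).1
  refine (Finset.sum_le_sum hpoint).trans ?_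
  apply weighted_lym hanti (fun i => (i.choose (i / 2)).choose r)
  intro i hi
  rw [mul_comm]
  have hmem : i ∈ Finset.range (n + 1) := Finset.mem_range.mpr (by omega)
  exact Finset.le_sup (f := fun i => n.choose i * (i.choose (i / 2)).choose r) hmem

end ProofAux

namespace ProofAux

variable {n : ℕ}

lemma la_wedge_le (r : ℕ) (hr : 1 ≤ r) :
    La n (PChain 3) (WedgePoset r) ≤
      (Finset.range (n + 1)).sup (fun i => n.choose i * (i.choose (i / 2)).choose r) :=
  Finset.sup_le fun F hF => wedge_upper r hr F (Finset.mem_filter.mp hF).2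

lemma la_vee_le (r : ℕ) (hr : 1 ≤ r) :
    La n (PChain 3) (VeePoset r) ≤
      (Finset.range (n + 1)).sup (fun i => n.choose i * (i.choose (i / 2)).choose r) := by
  refine Finset.sup_le fun F hF => ?_
  rw [copyCount_vee_eq_compl]
  exact wedge_upper r hr _ (free_compl (Finset.mem_filter.mp hF).2)

lemma exists_maximizer (r : ℕ) (hr : 1 ≤ r) (hn : 1 ≤ n)
    (hM : (Finset.range (n + 1)).sup (fun i => n.choose i * (i.choose (i / 2)).choose r) ≠ 0) :
    ∃ i, 1 ≤ i ∧ i ≤ n ∧ n.choose i * (i.choose (i / 2)).choose r =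
      (Finset.range (n + 1)).sup (fun i => n.choose i * (i.choose (i / 2)).choose r) := by
  set f : ℕ → ℕ := fun i => n.choose i * (i.choose (i / 2)).choose r with hf
  obtain ⟨i0, hi0mem, hi0⟩ := Finset.exists_mem_eq_sup (Finset.range (n + 1))
    ⟨0, Finset.mem_range.mpr (by omega)⟩ f
  have hpos : 0 < f i0 := by rw [← hi0]; omega
  have hi0n : i0 ≤ n := by
    by_contra h
    have : n.choose i0 = 0 := Nat.choose_eq_zero_of_lt (by omega)
    rw [hf] at hpos
    simp only [this, Nat.zero_mul] at hpos
    omega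
  by_cases h0 : i0 = 0
  · -- then r = 1, M = 1, and f 1 = n ≤ 1 so n = 1
    have hf0 : f 0 = Nat.choose 1 r := by
      rw [hf]; norm_num
    have hr1 : r = 1 := by
      by_contra hr2
      have : Nat.choose 1 r = 0 := Nat.choose_eq_zero_of_lt (by omega)
      rw [h0, hf0, this] at hpos
      omega
    have hM1 : (Finset.range (n + 1)).sup f = 1 := by
      rw [hi0, h0, hf0, hr1, Nat.choose_self]
    have h1mem : (1 : ℕ) ∈ Finset.range (n + 1) := Finset.mem_range.mpr (by omega)
    have hf1 : f 1 = n := by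
      rw [hf, hr1]; norm_num
    have hle : f 1 ≤ (Finset.range (n + 1)).sup f := Finset.le_sup h1mem
    have hn1 : n = 1 := by omega
    refine ⟨1, le_refl 1, by omega, ?_⟩
    show f 1 = (Finset.range (n + 1)).sup f
    rw [hf1, hM1, hn1]
  · exact ⟨i0, by omega, hi0n, hi0.symm⟩

lemma la_wedge_ge (r : ℕ) (hr : 1 ≤ r) (hn : 1 ≤ n) :
    (Finset.range (n + 1)).sup (fun i => n.choose i * (i.choose (i / 2)).choose r) ≤
      La n (PChain 3) (WedgePoset r) := by
  by_cases hM : (Finset.range (n + 1)).sup (fun i => n.choose i * (i.choose (i / 2)).choose r) = 0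
  · rw [hM]; exact Nat.zero_le _
  obtain ⟨i, hi1, hin, hieq⟩ := exists_maximizer r hr hn hM
  have hlt : i / 2 < i := Nat.div_lt_self (by omega) one_lt_two
  set F0 := ((Finset.univ : Finset (Fin n)).powersetCard i) ∪
      ((Finset.univ : Finset (Fin n)).powersetCard (i / 2)) with hF0
  have hmem : F0 ∈ (Finset.univ : Finset (Finset (Finset (Fin n)))).filter
      (fun F => copyCount (PChain 3) F = 0) :=
    Finset.mem_filter.mpr ⟨Finset.mem_univ _, construction_free i (i / 2) hlt⟩
  calc (Finset.range (n + 1)).sup (fun i => n.choose i * (i.choose (i / 2)).choose r)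
      = n.choose i * (i.choose (i / 2)).choose r := hieq.symm
    _ ≤ copyCount (WedgePoset r) F0 := construction_count r i (i / 2) hlt
    _ ≤ La n (PChain 3) (WedgePoset r) := Finset.le_sup (f := copyCount (WedgePoset r)) hmem

lemma la_vee_ge (r : ℕ) (hr : 1 ≤ r) (hn : 1 ≤ n) :
    (Finset.range (n + 1)).sup (fun i => n.choose i * (i.choose (i / 2)).choose r) ≤
      La n (PChain 3) (VeePoset r) := by
  by_cases hM : (Finset.range (n + 1)).sup (fun i => n.choose i * (i.choose (i / 2)).choose r) = 0
  · rw [hM]; exact Nat.zero_le _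
  obtain ⟨i, hi1, hin, hieq⟩ := exists_maximizer r hr hn hM
  have hlt : i / 2 < i := Nat.div_lt_self (by omega) one_lt_two
  set F0 := ((Finset.univ : Finset (Fin n)).powersetCard i) ∪
      ((Finset.univ : Finset (Fin n)).powersetCard (i / 2)) with hF0
  set F1 := F0.image (fun A => Aᶜ) with hF1
  have hmem : F1 ∈ (Finset.univ : Finset (Finset (Finset (Fin n)))).filter
      (fun F => copyCount (PChain 3) F = 0) :=
    Finset.mem_filter.mpr ⟨Finset.mem_univ _, free_compl (construction_free i (i / 2) hlt)⟩
  have hcc : copyCount (VeePoset r) F1 = copyCount (WedgePoset r) F0 := by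
    rw [copyCount_vee_eq_compl, hF1, image_compl_compl]
  calc (Finset.range (n + 1)).sup (fun i => n.choose i * (i.choose (i / 2)).choose r)
      = n.choose i * (i.choose (i / 2)).choose r := hieq.symm
    _ ≤ copyCount (WedgePoset r) F0 := construction_count r i (i / 2) hlt
    _ = copyCount (VeePoset r) F1 := hcc.symm
    _ ≤ La n (PChain 3) (VeePoset r) := Finset.le_sup (f := copyCount (VeePoset r)) hmem

lemma la_part1 (r : ℕ) (hr : 1 ≤ r) (hn : 1 ≤ n) :
    La n (PChain 3) (WedgePoset r) =
        (Finset.range (n + 1)).sup (fun i => n.choose i * (i.choose (i / 2)).choose r) ∧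
      La n (PChain 3) (VeePoset r) =
        (Finset.range (n + 1)).sup (fun i => n.choose i * (i.choose (i / 2)).choose r) :=
  ⟨le_antisymm (la_wedge_le r hr) (la_wedge_ge r hr hn),
    le_antisymm (la_vee_le r hr) (la_vee_ge r hr hn)⟩

end ProofAux

namespace ProofAux

lemma ratio_ub (n m' : ℕ) : ∀ d : ℕ,
    n.choose (m' + d) * (m' + 1) ^ d ≤ n.choose m' * (n - m') ^ d := by
  intro d
  induction d with
  | zero => simp
  | succ d ih =>
    calc n.choose (m' + (d + 1)) * (m' + 1) ^ (d + 1)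
        = n.choose (m' + d + 1) * (m' + 1) * (m' + 1) ^ d := by ring_nf
      _ ≤ n.choose (m' + d + 1) * (m' + d + 1) * (m' + 1) ^ d := by
          apply Nat.mul_le_mul_right
          apply Nat.mul_le_mul_left
          omega
      _ = n.choose (m' + d) * (n - (m' + d)) * (m' + 1) ^ d := by
          rw [Nat.choose_succ_right_eq]
      _ ≤ n.choose (m' + d) * (n - m') * (m' + 1) ^ d := by
          apply Nat.mul_le_mul_right
          apply Nat.mul_le_mul_left
          omega
      _ = (n - m') * (n.choose (m' + d) * (m' + 1) ^ d) := by ring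
      _ ≤ (n - m') * (n.choose m' * (n - m') ^ d) := Nat.mul_le_mul_left _ ih
      _ = n.choose m' * (n - m') ^ (d + 1) := by ring

lemma ratio_lb (n m : ℕ) : ∀ d m' : ℕ, m + d ≤ m' → m' ≤ n →
    n.choose m * (n - m' + 1) ^ d ≤ n.choose (m + d) * m' ^ d := by
  intro d
  induction d with
  | zero => simp
  | succ d ih =>
    intro m' hdm' hm'n
    have h1 : n.choose (m + d) * (n - m' + 1) ≤ n.choose (m + d + 1) * m' := by
      have hid : n.choose (m + d + 1) * (m + d + 1) = n.choose (m + d) * (n - (m + d)) :=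
        Nat.choose_succ_right_eq n (m + d)
      calc n.choose (m + d) * (n - m' + 1) ≤ n.choose (m + d) * (n - (m + d)) := by
            apply Nat.mul_le_mul_left
            omega
        _ = n.choose (m + d + 1) * (m + d + 1) := hid.symm
        _ ≤ n.choose (m + d + 1) * m' := by
            apply Nat.mul_le_mul_left
            omega
    calc n.choose m * (n - m' + 1) ^ (d + 1)
        = (n.choose m * (n - m' + 1) ^ d) * (n - m' + 1) := by ring
      _ ≤ (n.choose (m + d) * m' ^ d) * (n - m' + 1) := by
          apply Nat.mul_le_mul_right
          exact ih m' (by omega) hm'n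
      _ = (n.choose (m + d) * (n - m' + 1)) * m' ^ d := by ring
      _ ≤ (n.choose (m + d + 1) * m') * m' ^ d := Nat.mul_le_mul_right _ h1
      _ = n.choose (m + d + 1) * m' ^ (d + 1) := by ring

lemma central_lower (m : ℕ) : 2 ^ m ≤ (m + 1) * m.choose (m / 2) := by
  have hsum := Nat.sum_range_choose m
  have hle : ∑ j ∈ Finset.range (m + 1), m.choose j ≤
      (Finset.range (m + 1)).card • m.choose (m / 2) :=
    Finset.sum_le_card_nsmul _ _ _ (fun j _ => Nat.choose_le_middle j m)
  rw [Finset.card_range, smul_eq_mul] at hle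
  omega

lemma central_upper (m : ℕ) : m.choose (m / 2) ≤ 2 ^ m := by
  have hsum := Nat.sum_range_choose m
  have hmem : m / 2 ∈ Finset.range (m + 1) := Finset.mem_range.mpr (by omega)
  have h2 := Finset.single_le_sum (f := fun j => m.choose j) (fun j _ => Nat.zero_le _) hmem
  omega

lemma term_ub' (r m : ℕ) : (m.choose (m / 2)).choose r ≤ 2 ^ (m * r) := by
  calc (m.choose (m / 2)).choose r ≤ (m.choose (m / 2)) ^ r := Nat.choose_le_pow _ _
    _ ≤ (2 ^ m) ^ r := Nat.pow_le_pow_left (central_upper m) r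
    _ = 2 ^ (m * r) := by rw [← pow_mul]

lemma term_lb (r n m' : ℕ) (h2r : 2 * r ≤ m'.choose (m' / 2)) (hm'n : m' ≤ n) :
    2 ^ (m' * r) ≤ ((n + 1) * 2) ^ r * r.factorial * (m'.choose (m' / 2)).choose r := by
  set a := m'.choose (m' / 2) with ha
  have h1 : (a + 1 - r) ^ r ≤ r.factorial * a.choose r := by
    rw [← Nat.descFactorial_eq_factorial_mul_choose]
    exact Nat.pow_sub_le_descFactorial a r
  have h2 : a ≤ 2 * (a + 1 - r) := by omega
  calc 2 ^ (m' * r) = (2 ^ m') ^ r := by rw [← pow_mul]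
    _ ≤ ((m' + 1) * a) ^ r := Nat.pow_le_pow_left (central_lower m') r
    _ ≤ ((n + 1) * a) ^ r := Nat.pow_le_pow_left (Nat.mul_le_mul_right _ (by omega)) r
    _ = (n + 1) ^ r * a ^ r := by rw [mul_pow]
    _ ≤ (n + 1) ^ r * (2 * (a + 1 - r)) ^ r :=
        Nat.mul_le_mul_left _ (Nat.pow_le_pow_left h2 r)
    _ = (n + 1) ^ r * (2 ^ r * (a + 1 - r) ^ r) := by rw [mul_pow]
    _ ≤ (n + 1) ^ r * (2 ^ r * (r.factorial * a.choose r)) :=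
        Nat.mul_le_mul_left _ (Nat.mul_le_mul_left _ h1)
    _ = ((n + 1) * 2) ^ r * r.factorial * a.choose r := by rw [mul_pow]; ring

lemma key_high (r n m' d : ℕ) (hmn : m' + d ≤ n)
    (h2r : 2 * r ≤ m'.choose (m' / 2))
    (hmax : n.choose m' * ((m'.choose (m' / 2)).choose r) ≤
      n.choose (m' + d) * (((m' + d).choose ((m' + d) / 2)).choose r)) :
    2 ^ (m' * r) * (m' + 1) ^ d ≤
      ((n + 1) * 2) ^ r * r.factorial * ((n - m') ^ d * 2 ^ ((m' + d) * r)) := by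
  set K := ((n + 1) * 2) ^ r * r.factorial with hK
  have hpos : 0 < n.choose m' := Nat.choose_pos (by omega)
  apply Nat.le_of_mul_le_mul_left _ hpos
  calc n.choose m' * (2 ^ (m' * r) * (m' + 1) ^ d)
      = (2 ^ (m' * r)) * n.choose m' * (m' + 1) ^ d := by ring
    _ ≤ (K * (m'.choose (m' / 2)).choose r) * n.choose m' * (m' + 1) ^ d := by
        apply Nat.mul_le_mul_right
        apply Nat.mul_le_mul_right
        exact term_lb r n m' h2r (by omega)
    _ = K * (n.choose m' * ((m'.choose (m' / 2)).choose r)) * (m' + 1) ^ d := by ring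
    _ ≤ K * (n.choose (m' + d) * (((m' + d).choose ((m' + d) / 2)).choose r)) * (m' + 1) ^ d := by
        apply Nat.mul_le_mul_right
        exact Nat.mul_le_mul_left _ hmax
    _ ≤ K * (n.choose (m' + d) * 2 ^ ((m' + d) * r)) * (m' + 1) ^ d := by
        apply Nat.mul_le_mul_right
        exact Nat.mul_le_mul_left _ (Nat.mul_le_mul_left _ (term_ub' r (m' + d)))
    _ = (K * 2 ^ ((m' + d) * r)) * (n.choose (m' + d) * (m' + 1) ^ d) := by ring
    _ ≤ (K * 2 ^ ((m' + d) * r)) * (n.choose m' * (n - m') ^ d) :=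
        Nat.mul_le_mul_left _ (ratio_ub n m' d)
    _ = n.choose m' * (K * ((n - m') ^ d * 2 ^ ((m' + d) * r))) := by ring

lemma key_low (r n m d : ℕ) (hmn : m + d ≤ n)
    (h2r : 2 * r ≤ (m + d).choose ((m + d) / 2))
    (hmax : n.choose (m + d) * (((m + d).choose ((m + d) / 2)).choose r) ≤
      n.choose m * ((m.choose (m / 2)).choose r)) :
    (n - (m + d) + 1) ^ d * 2 ^ ((m + d) * r) ≤
      ((n + 1) * 2) ^ r * r.factorial * ((m + d) ^ d * 2 ^ (m * r)) := by
  set K := ((n + 1) * 2) ^ r * r.factorial with hK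
  have hpos : 0 < n.choose m := Nat.choose_pos (by omega)
  apply Nat.le_of_mul_le_mul_left _ hpos
  calc n.choose m * ((n - (m + d) + 1) ^ d * 2 ^ ((m + d) * r))
      = (n.choose m * (n - (m + d) + 1) ^ d) * 2 ^ ((m + d) * r) := by ring
    _ ≤ (n.choose (m + d) * (m + d) ^ d) * 2 ^ ((m + d) * r) := by
        apply Nat.mul_le_mul_right
        exact ratio_lb n m d (m + d) (le_refl _) hmn
    _ = (n.choose (m + d) * 2 ^ ((m + d) * r)) * (m + d) ^ d := by ring
    _ ≤ (n.choose (m + d) * (K * ((m + d).choose ((m + d) / 2)).choose r)) * (m + d) ^ d := by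
        apply Nat.mul_le_mul_right
        exact Nat.mul_le_mul_left _ (term_lb r n (m + d) h2r hmn)
    _ = K * (n.choose (m + d) * (((m + d).choose ((m + d) / 2)).choose r)) * (m + d) ^ d := by
        ring
    _ ≤ K * (n.choose m * ((m.choose (m / 2)).choose r)) * (m + d) ^ d := by
        apply Nat.mul_le_mul_right
        exact Nat.mul_le_mul_left _ hmax
    _ ≤ K * (n.choose m * 2 ^ (m * r)) * (m + d) ^ d := by
        apply Nat.mul_le_mul_right
        exact Nat.mul_le_mul_left _ (Nat.mul_le_mul_left _ (term_ub' r m))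
    _ = n.choose m * (K * ((m + d) ^ d * 2 ^ (m * r))) := by ring

end ProofAux

namespace ProofAux

open Filter

lemma sq_le_two_pow : ∀ k : ℕ, 4 ≤ k → k * k ≤ 2 ^ k := by
  intro k hk
  induction k, hk using Nat.le_induction with
  | base => norm_num
  | succ k hk ih =>
    have h1 : 2 * k + 1 ≤ k * k := by nlinarith
    calc (k + 1) * (k + 1) = k * k + (2 * k + 1) := by ring
      _ ≤ k * k + k * k := by omega
      _ = 2 * (k * k) := by ring
      _ ≤ 2 * 2 ^ k := by omega
      _ = 2 ^ (k + 1) := by rw [pow_succ]; ring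

lemma growth_lemma (r : ℕ) : ∀ k : ℕ, 4 * r + 8 ≤ k → 2 * r ≤ k.choose (k / 2) := by
  intro k hk
  have h1 : 2 * r * (k + 1) ≤ 2 ^ k := by
    calc 2 * r * (k + 1) ≤ 2 * r * (2 * k) := by
          apply Nat.mul_le_mul_left
          omega
      _ = (4 * r) * k := by ring
      _ ≤ k * k := Nat.mul_le_mul_right _ (by omega)
      _ ≤ 2 ^ k := sq_le_two_pow k (by omega)
  have h2 := central_lower k
  have h4 : (k + 1) * (2 * r) ≤ (k + 1) * k.choose (k / 2) := by
    calc (k + 1) * (2 * r) = 2 * r * (k + 1) := by ring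
      _ ≤ 2 ^ k := h1
      _ ≤ (k + 1) * k.choose (k / 2) := h2
  exact Nat.le_of_mul_le_mul_left h4 (by omega)

set_option maxHeartbeats 1600000 in
/-- The main window lemma for Part 2. -/
lemma window (r : ℕ) (hr : 1 ≤ r) (ir : ℕ → ℕ)
    (H : ∀ n : ℕ, 1 ≤ n → ir n ≤ n ∧
      n.choose (ir n) * ((ir n).choose (ir n / 2)).choose r =
        (Finset.range (n + 1)).sup (fun i => n.choose i * (i.choose (i / 2)).choose r))
    (ε₁ : ℝ) (hε₁ : 0 < ε₁) (hε₂ : ε₁ ≤ 1 / 2) :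
    ∀ᶠ n : ℕ in atTop,
      ((2 : ℝ) ^ r / ((2 : ℝ) ^ r + 1) - ε₁) * n < (ir n : ℝ) ∧
      (ir n : ℝ) < ((2 : ℝ) ^ r / ((2 : ℝ) ^ r + 1) + ε₁) * n := by
  set c : ℝ := (2 : ℝ) ^ r / ((2 : ℝ) ^ r + 1) with hc
  have h2pow : (2 : ℝ) ≤ (2 : ℝ) ^ r := by
    calc (2 : ℝ) = 2 ^ 1 := (pow_one 2).symm
      _ ≤ 2 ^ r := pow_le_pow_right₀ (by norm_num) hr
  have h2pos : (0 : ℝ) < (2 : ℝ) ^ r + 1 := by positivity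
  have hid : (2 : ℝ) ^ r * (1 - c) = c := by
    rw [hc]; field_simp; ring
  have hcl : (2 : ℝ) / 3 ≤ c := by
    rw [hc, div_le_div_iff₀ (by norm_num) h2pos]; nlinarith
  have hcu : c < 1 := by
    rw [hc, div_lt_one h2pos]; linarith
  have hbpos : (0 : ℝ) < c - ε₁ / 2 := by linarith
  have hapos : (0 : ℝ) < c + ε₁ / 2 := by linarith
  set ρ : ℝ := (c + ε₁ / 2) / (c - ε₁ / 2) with hρ
  have hρ1 : 1 < ρ := by
    rw [hρ, lt_div_iff₀ hbpos]; linarith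
  have hρ0 : (0 : ℝ) < ρ := lt_trans one_pos hρ1
  set q : ℝ := ρ ^ (ε₁ / 2 : ℝ) with hq
  have hq1 : 1 < q := by
    rw [hq, Real.one_lt_rpow_iff_of_pos hρ0]
    exact Or.inl ⟨hρ1, by linarith⟩
  have EvA : ∀ᶠ n : ℕ in atTop, ∀ d : ℕ, (ε₁ / 2) * n - 1 ≤ (d : ℝ) →
      ((((n + 1) * 2) ^ r * r.factorial : ℕ) : ℝ) < ρ ^ d := by
    have htend := tendsto_pow_const_div_const_pow_of_one_lt r hq1
    have hApos : (0 : ℝ) < (4 : ℝ) ^ r * (r.factorial : ℝ) * ρ := by positivity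
    have hev := htend.eventually
      (eventually_lt_nhds (show (0 : ℝ) < 1 / ((4 : ℝ) ^ r * (r.factorial : ℝ) * ρ) from
        by positivity))
    filter_upwards [hev, eventually_ge_atTop 1] with n hn hn1
    intro d hd
    have hn1' : (1 : ℝ) ≤ (n : ℝ) := by exact_mod_cast hn1
    have hqpos : (0 : ℝ) < q := by linarith
    have hqn : (0 : ℝ) < q ^ n := pow_pos hqpos n
    have hK : ((((n + 1) * 2) ^ r * r.factorial : ℕ) : ℝ) ≤
        (4 : ℝ) ^ r * (n : ℝ) ^ r * (r.factorial : ℝ) := by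
      push_cast
      have h1 : ((n : ℝ) + 1) * 2 ≤ 4 * n := by linarith
      calc (((n : ℝ) + 1) * 2) ^ r * (r.factorial : ℝ)
          ≤ (4 * (n : ℝ)) ^ r * (r.factorial : ℝ) := by
            apply mul_le_mul_of_nonneg_right _ (by positivity)
            exact pow_le_pow_left₀ (by linarith) h1 r
        _ = (4 : ℝ) ^ r * (n : ℝ) ^ r * (r.factorial : ℝ) := by rw [mul_pow]
    have hAq : (4 : ℝ) ^ r * (r.factorial : ℝ) * ρ * ((n : ℝ) ^ r) < q ^ n := by
      rw [div_lt_div_iff₀ hqn hApos] at hn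
      linarith [hn]
    have hrd : q ^ n / ρ ≤ ρ ^ d := by
      have e1 : (ρ : ℝ) ^ d = ρ ^ ((d : ℝ)) := (Real.rpow_natCast ρ d).symm
      have e2 : q ^ n = ρ ^ ((ε₁ / 2) * (n : ℝ)) := by
        rw [hq, ← Real.rpow_natCast (ρ ^ (ε₁ / 2 : ℝ)) n, ← Real.rpow_mul (le_of_lt hρ0)]
      have e3 : q ^ n / ρ = ρ ^ ((ε₁ / 2) * (n : ℝ) - 1) := by
        rw [e2, Real.rpow_sub hρ0, Real.rpow_one]
      rw [e3, e1]
      exact (Real.rpow_le_rpow_left_iff hρ1).mpr hd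
    calc ((((n + 1) * 2) ^ r * r.factorial : ℕ) : ℝ)
        ≤ (4 : ℝ) ^ r * (n : ℝ) ^ r * (r.factorial : ℝ) := hK
      _ < q ^ n / ρ := by
          rw [lt_div_iff₀ hρ0]
          nlinarith [hAq]
      _ ≤ ρ ^ d := hrd
  have EvB : ∀ᶠ n : ℕ in atTop, ∀ k : ℕ, (n : ℝ) / 3 ≤ (k : ℝ) →
      2 * r ≤ k.choose (k / 2) := by
    filter_upwards [eventually_ge_atTop (12 * r + 24)] with n hn
    intro k hk
    apply growth_lemma r
    have h1 : ((12 * r + 24 : ℕ) : ℝ) ≤ (n : ℝ) := by exact_mod_cast hn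
    have h2 : ((4 * r + 8 : ℕ) : ℝ) ≤ (k : ℝ) := by
      push_cast at h1 ⊢
      linarith
    exact_mod_cast h2
  have EvC : ∀ᶠ n : ℕ in atTop, (2 : ℝ) ≤ (ε₁ / 2) * n := by
    have h := Filter.Tendsto.const_mul_atTop (by linarith : (0 : ℝ) < ε₁ / 2)
      (tendsto_natCast_atTop_atTop (R := ℝ))
    exact h.eventually_ge_atTop 2
  filter_upwards [EvA, EvB, EvC, eventually_ge_atTop 12] with n hA hB hC hn12
  have hn1 : 1 ≤ n := by omega
  have hn12R : (12 : ℝ) ≤ (n : ℝ) := by exact_mod_cast hn12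
  obtain ⟨hirn, hsup⟩ := H n hn1
  set m := ir n with hm
  have hn0 : (0 : ℝ) < (n : ℝ) := by exact_mod_cast hn1
  have hmaxle : ∀ m' : ℕ, m' ≤ n →
      n.choose m' * ((m'.choose (m' / 2)).choose r) ≤
        n.choose m * ((m.choose (m / 2)).choose r) := by
    intro m' hm'
    rw [hsup]
    exact Finset.le_sup (f := fun i => n.choose i * (i.choose (i / 2)).choose r)
      (Finset.mem_range.mpr (by omega))
  have hmR : (m : ℝ) ≤ (n : ℝ) := by exact_mod_cast hirn
  constructor
  · -- lower bound: (c - ε₁) * n < m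
    by_contra hcon
    push_neg at hcon
    set m' : ℕ := ⌊(c - ε₁ / 2) * n⌋₊ with hm'
    have hm'le : (m' : ℝ) ≤ (c - ε₁ / 2) * n := Nat.floor_le (by positivity)
    have hm'ge : (c - ε₁ / 2) * n - 1 < (m' : ℝ) := Nat.sub_one_lt_floor _
    have ering : (c - ε₁ / 2) * (n : ℝ) - (c - ε₁) * n = (ε₁ / 2) * n := by ring
    have hmm'R : (m : ℝ) < (m' : ℝ) := by linarith [hC]
    have hmm' : m ≤ m' := le_of_lt (by exact_mod_cast hmm'R)
    have hm'nR : (m' : ℝ) ≤ (n : ℝ) := by nlinarith [hm'le, hn0.le]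
    have hm'n : m' ≤ n := by exact_mod_cast hm'nR
    set d : ℕ := m' - m with hd
    have hdm : m + d = m' := by omega
    have hdR : (d : ℝ) = (m' : ℝ) - (m : ℝ) := by
      rw [hd]; push_cast [Nat.cast_sub hmm']; ring
    have hq5 : (5 : ℝ) / 12 ≤ c - ε₁ / 2 := by linarith
    have hq5' : (5 : ℝ) / 12 * n ≤ (c - ε₁ / 2) * n :=
      mul_le_mul_of_nonneg_right hq5 hn0.le
    have h2r : 2 * r ≤ m'.choose (m' / 2) := by
      apply hB
      linarith [hm'ge, hq5', hn12R]
    have hkey := key_low r n m d (by omega) (by rw [hdm]; exact h2r)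
      (by rw [hdm]; exact hmaxle m' hm'n)
    rw [hdm] at hkey
    have hkeyR : ((n : ℝ) - m' + 1) ^ d * 2 ^ (m' * r) ≤
        ((((n + 1) * 2) ^ r * r.factorial : ℕ) : ℝ) * ((m' : ℝ) ^ d * 2 ^ (m * r)) := by
      have hR := (Nat.cast_le (α := ℝ)).mpr hkey
      push_cast [Nat.cast_sub hm'n] at hR
      refine hR.trans_eq ?_; push_cast; ring
    set K : ℝ := ((((n + 1) * 2) ^ r * r.factorial : ℕ) : ℝ) with hK
    have hKpos : (0 : ℝ) ≤ K := Nat.cast_nonneg _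
    have hesplit : (2 : ℝ) ^ (m' * r) = 2 ^ (m * r) * 2 ^ (d * r) := by
      rw [← pow_add]
      congr 1
      rw [← hdm, Nat.add_mul]
    have h2mr : (0 : ℝ) < 2 ^ (m * r) := by positivity
    have step1 : ((n : ℝ) - m' + 1) ^ d * 2 ^ (d * r) ≤ K * (m' : ℝ) ^ d := by
      have h := hkeyR
      rw [hesplit] at h
      have h' : (((n : ℝ) - m' + 1) ^ d * 2 ^ (d * r)) * 2 ^ (m * r) ≤
          (K * (m' : ℝ) ^ d) * 2 ^ (m * r) := by nlinarith [h]
      exact le_of_mul_le_mul_right h' h2mr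
    have step2 : ((2 : ℝ) ^ r * ((n : ℝ) - m' + 1)) ^ d ≤ K * (m' : ℝ) ^ d := by
      calc ((2 : ℝ) ^ r * ((n : ℝ) - m' + 1)) ^ d
          = ((n : ℝ) - m' + 1) ^ d * ((2 : ℝ) ^ r) ^ d := by rw [mul_pow]; ring
        _ = ((n : ℝ) - m' + 1) ^ d * 2 ^ (d * r) := by
            rw [← pow_mul, Nat.mul_comm r d]
        _ ≤ K * (m' : ℝ) ^ d := step1
    -- lower bound on 2^r * (n - m' + 1)
    have s1 : (1 - c + ε₁ / 2) * n ≤ (n : ℝ) - m' + 1 := by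
      have e : (1 - c + ε₁ / 2) * (n : ℝ) = n - (c - ε₁ / 2) * n := by ring
      linarith [hm'le]
    have s2 : (2 : ℝ) ^ r * ((1 - c + ε₁ / 2) * n) ≤ 2 ^ r * ((n : ℝ) - m' + 1) :=
      mul_le_mul_of_nonneg_left s1 (by positivity)
    have s3 : (2 : ℝ) ^ r * ((1 - c + ε₁ / 2) * n) = c * n + 2 ^ r * (ε₁ / 2) * n := by
      have e : (2 : ℝ) ^ r * ((1 - c + ε₁ / 2) * n) =
          ((2 : ℝ) ^ r * (1 - c)) * n + 2 ^ r * (ε₁ / 2) * n := by ring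
      rw [e, hid]
    have s4 : (ε₁ / 2) * (n : ℝ) ≤ 2 ^ r * (ε₁ / 2) * n := by
      have h0 : (0 : ℝ) ≤ ((2 : ℝ) ^ r - 1) * ((ε₁ / 2) * n) :=
        mul_nonneg (by linarith) (by positivity)
      nlinarith [h0]
    have hlow1 : (c + ε₁ / 2) * n ≤ 2 ^ r * ((n : ℝ) - m' + 1) := by
      have e : (c + ε₁ / 2) * (n : ℝ) = c * n + (ε₁ / 2) * n := by ring
      linarith [s2, s3, s4]
    have final1 : ((c + ε₁ / 2) * n) ^ d ≤ K * ((c - ε₁ / 2) * n) ^ d := by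
      calc ((c + ε₁ / 2) * n) ^ d ≤ ((2 : ℝ) ^ r * ((n : ℝ) - m' + 1)) ^ d :=
            pow_le_pow_left₀ (by positivity) hlow1 d
        _ ≤ K * (m' : ℝ) ^ d := step2
        _ ≤ K * ((c - ε₁ / 2) * n) ^ d := by
            apply mul_le_mul_of_nonneg_left _ hKpos
            exact pow_le_pow_left₀ (Nat.cast_nonneg _) hm'le d
    have hbn : (0 : ℝ) < (c - ε₁ / 2) * n := mul_pos hbpos hn0
    have hρeq : ρ = ((c + ε₁ / 2) * n) / ((c - ε₁ / 2) * n) := by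
      rw [hρ, mul_div_mul_right _ _ (ne_of_gt hn0)]
    have hρd : ρ ^ d ≤ K := by
      rw [hρeq, div_pow, div_le_iff₀ (pow_pos hbn d)]
      exact final1
    have hdlow : (ε₁ / 2) * n - 1 ≤ (d : ℝ) := by
      rw [hdR]
      linarith [hm'ge, hcon, ering]
    exact absurd hρd (not_le.mpr (hA d hdlow))
  · -- upper bound: m < (c + ε₁) * n
    by_contra hcon
    push_neg at hcon
    set m' : ℕ := ⌈(c + ε₁ / 2) * n⌉₊ with hm'
    have hm'ge : (c + ε₁ / 2) * n ≤ (m' : ℝ) := Nat.le_ceil _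
    have hm'lt : (m' : ℝ) < (c + ε₁ / 2) * n + 1 := Nat.ceil_lt_add_one (by positivity)
    have ering : (c + ε₁) * (n : ℝ) - (c + ε₁ / 2) * n = (ε₁ / 2) * n := by ring
    have hm'mR : (m' : ℝ) < (m : ℝ) := by linarith [hC, hcon]
    have hm'm : m' ≤ m := le_of_lt (by exact_mod_cast hm'mR)
    have hm'n : m' ≤ n := le_trans hm'm hirn
    have hm'nR : (m' : ℝ) ≤ (n : ℝ) := by exact_mod_cast hm'n
    set d : ℕ := m - m' with hd
    have hdm : m' + d = m := by omega
    have hdR : (d : ℝ) = (m : ℝ) - (m' : ℝ) := by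
      rw [hd]; push_cast [Nat.cast_sub hm'm]; ring
    have hq5' : (2 : ℝ) / 3 * n ≤ c * n := mul_le_mul_of_nonneg_right hcl hn0.le
    have h2r : 2 * r ≤ m'.choose (m' / 2) := by
      apply hB
      have e : (c + ε₁ / 2) * (n : ℝ) = c * n + (ε₁ / 2) * n := by ring
      linarith [hm'ge, hq5', hC, e]
    have hkey := key_high r n m' d (by omega) h2r
      (by rw [hdm]; exact hmaxle m' hm'n)
    rw [hdm] at hkey
    have hkeyR : (2 : ℝ) ^ (m' * r) * ((m' : ℝ) + 1) ^ d ≤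
        ((((n + 1) * 2) ^ r * r.factorial : ℕ) : ℝ) *
          (((n : ℝ) - m') ^ d * 2 ^ (m * r)) := by
      have hR := (Nat.cast_le (α := ℝ)).mpr hkey
      push_cast [Nat.cast_sub hm'n] at hR
      refine hR.trans_eq ?_; push_cast; ring
    set K : ℝ := ((((n + 1) * 2) ^ r * r.factorial : ℕ) : ℝ) with hK
    have hKpos : (0 : ℝ) ≤ K := Nat.cast_nonneg _
    have hesplit : (2 : ℝ) ^ (m * r) = 2 ^ (m' * r) * 2 ^ (d * r) := by
      rw [← pow_add]
      congr 1
      rw [← hdm, Nat.add_mul]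
    have h2mr : (0 : ℝ) < 2 ^ (m' * r) := by positivity
    have step1 : ((m' : ℝ) + 1) ^ d ≤ K * (((n : ℝ) - m') ^ d * 2 ^ (d * r)) := by
      have h := hkeyR
      rw [hesplit] at h
      have h' : ((m' : ℝ) + 1) ^ d * 2 ^ (m' * r) ≤
          (K * (((n : ℝ) - m') ^ d * 2 ^ (d * r))) * 2 ^ (m' * r) := by nlinarith [h]
      exact le_of_mul_le_mul_right h' h2mr
    have step2 : ((m' : ℝ) + 1) ^ d ≤ K * ((2 : ℝ) ^ r * ((n : ℝ) - m')) ^ d := by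
      have e : ((2 : ℝ) ^ r * ((n : ℝ) - m')) ^ d = ((n : ℝ) - m') ^ d * 2 ^ (d * r) := by
        rw [mul_pow, ← pow_mul, Nat.mul_comm r d]; ring
      rw [e]
      exact step1
    have s1 : (n : ℝ) - m' ≤ (1 - c - ε₁ / 2) * n := by
      have e : (1 - c - ε₁ / 2) * (n : ℝ) = n - (c + ε₁ / 2) * n := by ring
      linarith [hm'ge]
    have s2 : (2 : ℝ) ^ r * ((n : ℝ) - m') ≤ 2 ^ r * ((1 - c - ε₁ / 2) * n) :=
      mul_le_mul_of_nonneg_left s1 (by positivity)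
    have s3 : (2 : ℝ) ^ r * ((1 - c - ε₁ / 2) * n) = c * n - 2 ^ r * (ε₁ / 2) * n := by
      have e : (2 : ℝ) ^ r * ((1 - c - ε₁ / 2) * n) =
          ((2 : ℝ) ^ r * (1 - c)) * n - 2 ^ r * (ε₁ / 2) * n := by ring
      rw [e, hid]
    have s4 : (ε₁ / 2) * (n : ℝ) ≤ 2 ^ r * (ε₁ / 2) * n := by
      have h0 : (0 : ℝ) ≤ ((2 : ℝ) ^ r - 1) * ((ε₁ / 2) * n) :=
        mul_nonneg (by linarith) (by positivity)
      nlinarith [h0]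
    have hup1 : 2 ^ r * ((n : ℝ) - m') ≤ (c - ε₁ / 2) * n := by
      have e : (c - ε₁ / 2) * (n : ℝ) = c * n - (ε₁ / 2) * n := by ring
      linarith [s2, s3, s4]
    have hnm'nonneg : (0 : ℝ) ≤ (n : ℝ) - m' := by linarith
    have final1 : ((c + ε₁ / 2) * n) ^ d ≤ K * ((c - ε₁ / 2) * n) ^ d := by
      calc ((c + ε₁ / 2) * n) ^ d ≤ ((m' : ℝ) + 1) ^ d := by
            apply pow_le_pow_left₀ (by positivity)
            linarith [hm'ge]
        _ ≤ K * ((2 : ℝ) ^ r * ((n : ℝ) - m')) ^ d := step2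
        _ ≤ K * ((c - ε₁ / 2) * n) ^ d := by
            apply mul_le_mul_of_nonneg_left _ hKpos
            exact pow_le_pow_left₀ (by positivity) hup1 d
    have hbn : (0 : ℝ) < (c - ε₁ / 2) * n := mul_pos hbpos hn0
    have hρeq : ρ = ((c + ε₁ / 2) * n) / ((c - ε₁ / 2) * n) := by
      rw [hρ, mul_div_mul_right _ _ (ne_of_gt hn0)]
    have hρd : ρ ^ d ≤ K := by
      rw [hρeq, div_pow, div_le_iff₀ (pow_pos hbn d)]
      exact final1
    have hdlow : (ε₁ / 2) * n - 1 ≤ (d : ℝ) := by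
      rw [hdR]
      linarith [hm'lt, hcon, ering]
    exact absurd hρd (not_le.mpr (hA d hdlow))

end ProofAux

namespace ProofAux

open Filter

lemma tendsto_part (r : ℕ) (hr : 1 ≤ r) (ir : ℕ → ℕ)
    (H : ∀ n : ℕ, 1 ≤ n → ir n ≤ n ∧
      n.choose (ir n) * ((ir n).choose (ir n / 2)).choose r =
        (Finset.range (n + 1)).sup (fun i => n.choose i * (i.choose (i / 2)).choose r)) :
    Filter.Tendsto (fun n : ℕ => (ir n : ℝ) / (n : ℝ)) Filter.atTop
      (nhds ((2 : ℝ) ^ r / ((2 : ℝ) ^ r + 1))) := by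
  rw [Metric.tendsto_nhds]
  intro ε hε
  set ε₁ := min ε (1 / 2) with hε₁def
  have hε₁pos : 0 < ε₁ := lt_min hε (by norm_num)
  have hε₁le : ε₁ ≤ 1 / 2 := min_le_right _ _
  have hε₁ε : ε₁ ≤ ε := min_le_left _ _
  filter_upwards [window r hr ir H ε₁ hε₁pos hε₁le, eventually_ge_atTop 1] with n hw hn1
  have hn0 : (0 : ℝ) < (n : ℝ) := by exact_mod_cast hn1
  obtain ⟨h1, h2⟩ := hw
  have l1 : (2 : ℝ) ^ r / ((2 : ℝ) ^ r + 1) - ε₁ < (ir n : ℝ) / n := (lt_div_iff₀ hn0).mpr h1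
  have l2 : (ir n : ℝ) / n < (2 : ℝ) ^ r / ((2 : ℝ) ^ r + 1) + ε₁ := (div_lt_iff₀ hn0).mpr h2
  rw [Real.dist_eq, abs_lt]
  constructor <;> linarith

end ProofAux



theorem statement4 (r : ℕ) (hr : 1 ≤ r) :
    (∀ n : ℕ, 1 ≤ n →
      La n (PChain 3) (WedgePoset r) =
        (Finset.range (n + 1)).sup (fun i => n.choose i * (i.choose (i / 2)).choose r) ∧
      La n (PChain 3) (VeePoset r) =
        (Finset.range (n + 1)).sup (fun i => n.choose i * (i.choose (i / 2)).choose r)) ∧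
    (∀ ir : ℕ → ℕ,
      (∀ n : ℕ, 1 ≤ n → ir n ≤ n ∧
        n.choose (ir n) * ((ir n).choose (ir n / 2)).choose r =
          (Finset.range (n + 1)).sup (fun i => n.choose i * (i.choose (i / 2)).choose r)) →
      Filter.Tendsto (fun n : ℕ => (ir n : ℝ) / (n : ℝ)) Filter.atTop
        (nhds ((2 : ℝ) ^ r / ((2 : ℝ) ^ r + 1)))) := by
  constructor
  · intro n hn
    exact ProofAux.la_part1 r hr hn
  · intro ir H
    exact ProofAux.tendsto_part r hr ir H

end
end
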